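/- arXiv:2405.07929 — 5 statements merged into one kernel-verified Lean document; each statement's English description precedes it below -/
import Mathlib

section
/- Let d ≥ 2, 0 < α < d, and n ∈ ℕ, and set k := ⌊d/2⌋ + 1. Then there exists a constant C > 0, depending only on d, α and n, with the following property: if φ, ψ : ℝ^d → ℂ are measurable functions such that p_m(|·|^α φ) := sup_{ξ}(1+|ξ|²)^m |ξ|^α |φ(ξ)| and p_m(|·|^α ψ) := sup_{ξ}(1+|ξ|²)^m |ξ|^α |ψ(ξ)| are finite for every m ∈ ℕ, then for every ξ ∈ ℝ^d, (1+|ξ|²)^n |ξ|^α |(φ∗ψ)(ξ)| ≤ C·( p_n(|·|^α φ)·p_{n+k}(|·|^α ψ) + p_{n+k}(|·|^α φ)·p_n(|·|^α ψ) ). -/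
open MeasureTheory

/-- The weighted supremum seminorm `p_m(|·|^α φ) = sup_ξ (1+|ξ|²)^m |ξ|^α |φ(ξ)|`. -/
noncomputable def weightedSup (d : ℕ) (α : ℝ) (m : ℕ)
    (φ : EuclideanSpace ℝ (Fin d) → ℂ) : ℝ :=
  ⨆ ξ : EuclideanSpace ℝ (Fin d), (1 + ‖ξ‖ ^ 2) ^ m * (‖ξ‖ ^ α * ‖φ ξ‖)

open Real

variable {d : ℕ}

lemma aux_int1D {β : ℝ} (hβ : 0 < β) (hβ1 : β < 1) :
    Integrable (fun t : ℝ => |t| ^ (-β) * Real.exp (-t ^ 2)) := by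
  have h1 : Integrable (fun t : ℝ => t ^ (-β) * Real.exp (-t ^ 2)) := by
    simpa using integrable_rpow_mul_exp_neg_mul_sq (b := 1) one_pos (s := -β) (by linarith)
  have h2 : Integrable (fun t : ℝ => (-t) ^ (-β) * Real.exp (-(-t) ^ 2)) := h1.comp_neg
  refine (h1.abs.add h2.abs).mono' ?_ ?_
  · apply Measurable.aestronglyMeasurable
    fun_prop
  · filter_upwards with t
    have h0 : 0 ≤ |t| ^ (-β) * Real.exp (-t ^ 2) :=
      mul_nonneg (Real.rpow_nonneg (abs_nonneg t) _) (Real.exp_pos _).le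
    rw [Real.norm_eq_abs, abs_of_nonneg h0]
    simp only [Pi.add_apply]
    rcases lt_trichotomy t 0 with ht | ht | ht
    · have he : |t| ^ (-β) * Real.exp (-t ^ 2) = (-t) ^ (-β) * Real.exp (-(-t) ^ 2) := by
        rw [abs_of_neg ht]; ring_nf
      rw [he]
      exact le_add_of_nonneg_of_le (abs_nonneg _) (le_abs_self _)
    · subst ht
      simp [Real.zero_rpow (by linarith : -β ≠ 0)]
    · have he : |t| ^ (-β) * Real.exp (-t ^ 2) = t ^ (-β) * Real.exp (-t ^ 2) := by
        rw [abs_of_pos ht]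
      rw [he]
      exact le_add_of_le_of_nonneg (le_abs_self _) (abs_nonneg _)

lemma aux_prodG {β : ℝ} (hβ : 0 < β) (hβ1 : β < 1) :
    Integrable (fun x : EuclideanSpace ℝ (Fin d) =>
      ∏ i, |x i| ^ (-β) * Real.exp (-(x i) ^ 2)) := by
  have hg : Integrable (fun y : Fin d → ℝ => ∏ i, |y i| ^ (-β) * Real.exp (-(y i) ^ 2)) :=
    Integrable.fintype_prod (f := fun _ t => |t| ^ (-β) * Real.exp (-t ^ 2))
      (fun _ => aux_int1D hβ hβ1)
  have := ((EuclideanSpace.volume_preserving_symm_measurableEquiv_toLp (Fin d)).integrable_comp_emb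
      (MeasurableEquiv.toLp 2 (Fin d → ℝ)).symm.measurableEmbedding).2 hg
  exact this

lemma aux_coord_le (x : EuclideanSpace ℝ (Fin d)) (i : Fin d) : |x i| ≤ ‖x‖ := by
  rw [EuclideanSpace.norm_eq, ← Real.sqrt_sq_eq_abs]
  apply Real.sqrt_le_sqrt
  calc x i ^ 2 = ‖x i‖ ^ 2 := by rw [Real.norm_eq_abs, sq_abs]
    _ ≤ ∑ j, ‖x j‖ ^ 2 :=
      Finset.single_le_sum (f := fun j => ‖x j‖ ^ 2) (fun j _ => sq_nonneg _) (Finset.mem_univ i)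

lemma aux_ae_coord (hd : 2 ≤ d) :
    ∀ᵐ x : EuclideanSpace ℝ (Fin d), ∀ i, x i ≠ 0 := by
  haveI : NeZero d := ⟨by omega⟩
  have hK : ∀ i : Fin d, volume {x : EuclideanSpace ℝ (Fin d) | x i = 0} = 0 := by
    intro i
    let K : Submodule ℝ (EuclideanSpace ℝ (Fin d)) :=
      LinearMap.ker (PiLp.projₗ 2 (𝕜 := ℝ) (β := fun _ : Fin d => ℝ) i)
    have hKne : K ≠ ⊤ := by
      intro h
      have : (EuclideanSpace.single i (1:ℝ)) ∈ K := h ▸ Submodule.mem_top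
      rw [LinearMap.mem_ker] at this
      simp [K, EuclideanSpace.single_apply] at this
    have := Measure.addHaar_submodule (volume : Measure (EuclideanSpace ℝ (Fin d))) K hKne
    convert this using 2
    ext x; simp [K]
  have : volume (⋃ i : Fin d, {x : EuclideanSpace ℝ (Fin d) | x i = 0}) = 0 :=
    measure_iUnion_null hK
  have h2 := (measure_eq_zero_iff_ae_notMem).1 this
  filter_upwards [h2] with x hx i hxi
  exact hx (Set.mem_iUnion.2 ⟨i, hxi⟩)

lemma aux_int_h (hd : 2 ≤ d) {α : ℝ} (hα0 : 0 < α) (hαd : α < d) :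
    Integrable (fun x : EuclideanSpace ℝ (Fin d) =>
      ((1 + ‖x‖ ^ 2) ^ (d / 2 + 1) : ℝ)⁻¹ * ‖x‖ ^ (-α)) := by
  set k := d / 2 + 1 with hk
  have hd0 : (0:ℕ) < d := by omega
  set β : ℝ := α / d with hβdef
  have hβ : 0 < β := div_pos hα0 (by exact_mod_cast hd0)
  have hβ1 : β < 1 := (div_lt_one (by exact_mod_cast hd0)).2 hαd
  -- the Gaussian product majorant
  set G : EuclideanSpace ℝ (Fin d) → ℝ :=
    fun x => ∏ i, |x i| ^ (-β) * Real.exp (-(x i) ^ 2) with hG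
  have hGint : Integrable G := aux_prodG hβ hβ1
  have hdk : (Module.finrank ℝ (EuclideanSpace ℝ (Fin d)) : ℝ) < (2 * k : ℕ) := by
    rw [finrank_euclideanSpace_fin]
    exact_mod_cast (by omega : d < 2 * k)
  have htail : Integrable (fun x : EuclideanSpace ℝ (Fin d) => (1 + ‖x‖) ^ (-(2 * k : ℕ) : ℝ)) :=
    integrable_one_add_norm hdk
  refine ((hGint.const_mul (Real.exp d)).add (htail.const_mul (2 ^ k))).mono' ?_ ?_
  · apply Measurable.aestronglyMeasurable
    fun_prop
  · filter_upwards [aux_ae_coord hd] with x hx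
    have hnx : 0 ≤ ‖x‖ := norm_nonneg x
    have hG0 : 0 ≤ G x := Finset.prod_nonneg fun i _ => by positivity
    have h0 : 0 ≤ ((1 + ‖x‖ ^ 2) ^ k : ℝ)⁻¹ * ‖x‖ ^ (-α) := by positivity
    rw [Real.norm_eq_abs, abs_of_nonneg h0]
    rcases le_total ‖x‖ 1 with hcase | hcase
    · -- near zero : bound by exp d * G x
      have hxpos : 0 < ‖x‖ := by
        rcases eq_or_lt_of_le hnx with h | h
        · exfalso
          have : x = 0 := by rwa [eq_comm, norm_eq_zero] at h
          exact hx ⟨0, by omega⟩ (by simp [this])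
        · exact h
      have step1 : ((1 + ‖x‖ ^ 2) ^ k : ℝ)⁻¹ * ‖x‖ ^ (-α) ≤ ‖x‖ ^ (-α) := by
        have h1 : (1:ℝ) ≤ (1 + ‖x‖ ^ 2) ^ k := one_le_pow₀ (by nlinarith)
        have := Real.rpow_nonneg hnx (-α)
        calc ((1 + ‖x‖ ^ 2) ^ k : ℝ)⁻¹ * ‖x‖ ^ (-α) ≤ 1 * ‖x‖ ^ (-α) := by
              apply mul_le_mul_of_nonneg_right _ this
              exact inv_le_one_of_one_le₀ h1
          _ = ‖x‖ ^ (-α) := one_mul _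
      have hprodpos : 0 < ∏ i, |x i| := Finset.prod_pos fun i _ => abs_pos.2 (hx i)
      have step2 : ‖x‖ ^ (-α) ≤ ∏ i, |x i| ^ (-β) := by
        have hle : ∏ i, |x i| ≤ ‖x‖ ^ d := by
          calc ∏ i, |x i| ≤ ∏ _i : Fin d, ‖x‖ :=
                Finset.prod_le_prod (fun i _ => (abs_nonneg _)) (fun i _ => aux_coord_le x i)
            _ = ‖x‖ ^ d := by rw [Finset.prod_const, Finset.card_univ, Fintype.card_fin]
        have h1 : (‖x‖ ^ d : ℝ) ^ (-β) ≤ (∏ i, |x i|) ^ (-β) :=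
          Real.rpow_le_rpow_of_nonpos hprodpos hle (by linarith)
        have h2 : (‖x‖ ^ d : ℝ) ^ (-β) = ‖x‖ ^ (-α) := by
          rw [← Real.rpow_natCast ‖x‖ d, ← Real.rpow_mul hnx]
          congr 1
          field_simp [hβdef]
          have : (d:ℝ) ≠ 0 := by exact_mod_cast hd0.ne'
          rw [hβdef]; field_simp
        have h3 : ∏ i, |x i| ^ (-β) = (∏ i, |x i|) ^ (-β) :=
          Real.finset_prod_rpow _ _ (fun i _ => abs_nonneg _) _
        rw [← h2, h3]
        exact h1
      have step3 : ∏ i, |x i| ^ (-β) ≤ Real.exp d * G x := by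
        have : G x ≥ Real.exp (-d : ℝ) * ∏ i, |x i| ^ (-β) := by
          rw [hG]
          have : ∀ i : Fin d, |x i| ^ (-β) * Real.exp (-(1:ℝ)) ≤ |x i| ^ (-β) * Real.exp (-(x i) ^ 2) := by
            intro i
            apply mul_le_mul_of_nonneg_left _ (Real.rpow_nonneg (abs_nonneg _) _)
            apply Real.exp_le_exp.2
            have := aux_coord_le x i
            nlinarith [this, hcase, sq_abs (x i), abs_nonneg (x i)]
          calc Real.exp (-d : ℝ) * ∏ i, |x i| ^ (-β)
              = ∏ i : Fin d, |x i| ^ (-β) * Real.exp (-(1:ℝ)) := by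
                rw [Finset.prod_mul_distrib, Finset.prod_const, Finset.card_univ, Fintype.card_fin,
                  ← Real.exp_nat_mul]
                push_cast
                ring_nf
            _ ≤ ∏ i, |x i| ^ (-β) * Real.exp (-(x i) ^ 2) :=
                Finset.prod_le_prod (fun i _ => by positivity) (fun i _ => this i)
        calc ∏ i, |x i| ^ (-β) = Real.exp d * (Real.exp (-d:ℝ) * ∏ i, |x i| ^ (-β)) := by
              rw [← mul_assoc, ← Real.exp_add]
              simp
          _ ≤ Real.exp d * G x := mul_le_mul_of_nonneg_left this (Real.exp_pos _).le
      have : ((1 + ‖x‖ ^ 2) ^ k : ℝ)⁻¹ * ‖x‖ ^ (-α) ≤ Real.exp d * G x :=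
        step1.trans (step2.trans step3)
      refine this.trans ?_
      simp only [Pi.add_apply]
      have : (0:ℝ) ≤ 2 ^ k * (1 + ‖x‖) ^ (-(2 * k : ℕ) : ℝ) := by positivity
      linarith
    · -- tail : bound by 2^k (1+‖x‖)^{-2k}
      have h1 : ‖x‖ ^ (-α) ≤ 1 := by
        apply Real.rpow_le_one_of_one_le_of_nonpos hcase (by linarith)
      have h2 : ((1 + ‖x‖ ^ 2) ^ k : ℝ)⁻¹ ≤ 2 ^ k * (1 + ‖x‖) ^ (-(2 * k : ℕ) : ℝ) := by
        have hb : (0:ℝ) < 1 + ‖x‖ := by linarith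
        have key : ((1 + ‖x‖) ^ (2 * k) : ℝ) ≤ 2 ^ k * (1 + ‖x‖ ^ 2) ^ k := by
          have : ((1 + ‖x‖) ^ 2 : ℝ) ≤ 2 * (1 + ‖x‖ ^ 2) := by nlinarith
          calc ((1 + ‖x‖) ^ (2 * k) : ℝ) = ((1 + ‖x‖) ^ 2) ^ k := by rw [pow_mul]
            _ ≤ (2 * (1 + ‖x‖ ^ 2)) ^ k := pow_le_pow_left₀ (by positivity) this k
            _ = 2 ^ k * (1 + ‖x‖ ^ 2) ^ k := mul_pow _ _ _
        rw [Real.rpow_neg hb.le, Real.rpow_natCast]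
        have hA : (0:ℝ) < (1 + ‖x‖ ^ 2) ^ k := by positivity
        have hB : (0:ℝ) < (1 + ‖x‖) ^ (2 * k) := by positivity
        calc ((1 + ‖x‖ ^ 2) ^ k : ℝ)⁻¹
            = ((1 + ‖x‖ ^ 2) ^ k : ℝ)⁻¹ * ((1 + ‖x‖) ^ (2*k))⁻¹ * (1 + ‖x‖) ^ (2*k) := by
              field_simp
          _ ≤ ((1 + ‖x‖ ^ 2) ^ k : ℝ)⁻¹ * ((1 + ‖x‖) ^ (2*k))⁻¹ * (2 ^ k * (1 + ‖x‖ ^ 2) ^ k) :=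
              mul_le_mul_of_nonneg_left key (by positivity)
          _ = 2 ^ k * ((1 + ‖x‖) ^ (2 * k))⁻¹ := by
              field_simp
      calc ((1 + ‖x‖ ^ 2) ^ k : ℝ)⁻¹ * ‖x‖ ^ (-α)
          ≤ ((1 + ‖x‖ ^ 2) ^ k : ℝ)⁻¹ * 1 := by
            apply mul_le_mul_of_nonneg_left h1 (by positivity)
        _ = ((1 + ‖x‖ ^ 2) ^ k : ℝ)⁻¹ := mul_one _
        _ ≤ 2 ^ k * (1 + ‖x‖) ^ (-(2 * k : ℕ) : ℝ) := h2
        _ ≤ Real.exp d * G x + 2 ^ k * (1 + ‖x‖) ^ (-(2 * k : ℕ) : ℝ) := by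
            have hG0' : 0 ≤ Real.exp d * G x := by positivity
            linarith

lemma aux_key (n k : ℕ) {α a b c X Y A B : ℝ} (hα : 0 < α) (hX : 0 ≤ X) (hY : 0 ≤ Y)
    (hb : 0 < b) (hc : 0 ≤ c) (hcab : c ≤ a + b) (hba : b ≤ a)
    (hA : (1 + a ^ 2) ^ n * (a ^ α * X) ≤ A) (hB : (1 + b ^ 2) ^ (n + k) * (b ^ α * Y) ≤ B) :
    (1 + c ^ 2) ^ n * (c ^ α * (X * Y)) ≤
      2 ^ n * 2 ^ α * (A * B * (((1 + b ^ 2) ^ k : ℝ)⁻¹ * b ^ (-α))) := by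
  have ha : 0 < a := hb.trans_le hba
  have hc2a : c ≤ 2 * a := by linarith
  have h1 : ((1 + c ^ 2 : ℝ)) ^ n ≤ 2 ^ n * ((1 + a ^ 2) ^ n * (1 + b ^ 2) ^ n) := by
    have hpe : (1 + c ^ 2 : ℝ) ≤ 2 * ((1 + a ^ 2) * (1 + b ^ 2)) := by nlinarith
    calc ((1 + c ^ 2 : ℝ)) ^ n ≤ (2 * ((1 + a ^ 2) * (1 + b ^ 2))) ^ n :=
          pow_le_pow_left₀ (by positivity) hpe n
      _ = 2 ^ n * ((1 + a ^ 2) ^ n * (1 + b ^ 2) ^ n) := by rw [mul_pow, mul_pow]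
  have h2 : c ^ α ≤ 2 ^ α * a ^ α := by
    rw [← Real.mul_rpow (by norm_num) ha.le]
    exact Real.rpow_le_rpow hc hc2a hα.le
  have hTa : (0:ℝ) ≤ (1 + a ^ 2) ^ n * (a ^ α * X) := by positivity
  have hTb : (0:ℝ) ≤ (1 + b ^ 2) ^ (n + k) * (b ^ α * Y) := by positivity
  have hA0 : (0:ℝ) ≤ A := hTa.trans hA
  have hw : (0:ℝ) ≤ ((1 + b ^ 2) ^ k : ℝ)⁻¹ * b ^ (-α) := by positivity
  have heq : 2 ^ n * 2 ^ α *
      (((1 + a ^ 2) ^ n * (a ^ α * X)) * ((1 + b ^ 2) ^ (n + k) * (b ^ α * Y)) *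
        (((1 + b ^ 2) ^ k : ℝ)⁻¹ * b ^ (-α))) =
      (2 ^ n * ((1 + a ^ 2) ^ n * (1 + b ^ 2) ^ n)) * ((2 ^ α * a ^ α) * (X * Y)) := by
    have hbα : b ^ α * b ^ (-α) = 1 := by
      rw [← Real.rpow_add hb]; simp
    have hbk : ((1 + b ^ 2 : ℝ)) ^ (n + k) * (((1 + b ^ 2) ^ k : ℝ))⁻¹ = (1 + b ^ 2) ^ n := by
      rw [pow_add]
      field_simp
    calc 2 ^ n * 2 ^ α *
        (((1 + a ^ 2) ^ n * (a ^ α * X)) * ((1 + b ^ 2) ^ (n + k) * (b ^ α * Y)) *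
          (((1 + b ^ 2) ^ k : ℝ)⁻¹ * b ^ (-α)))
        = 2 ^ n * 2 ^ α * ((1 + a ^ 2) ^ n * (a ^ α * X) *
            (((1 + b ^ 2) ^ (n + k) * (((1 + b ^ 2) ^ k : ℝ))⁻¹) * ((b ^ α * b ^ (-α)) * Y))) := by
          ring
      _ = _ := by rw [hbα, hbk]; ring
  calc (1 + c ^ 2) ^ n * (c ^ α * (X * Y))
      ≤ (2 ^ n * ((1 + a ^ 2) ^ n * (1 + b ^ 2) ^ n)) * ((2 ^ α * a ^ α) * (X * Y)) := by
        apply mul_le_mul h1 _ (by positivity) (by positivity)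
        exact mul_le_mul_of_nonneg_right h2 (by positivity)
    _ = 2 ^ n * 2 ^ α *
        (((1 + a ^ 2) ^ n * (a ^ α * X)) * ((1 + b ^ 2) ^ (n + k) * (b ^ α * Y)) *
          (((1 + b ^ 2) ^ k : ℝ)⁻¹ * b ^ (-α))) := heq.symm
    _ ≤ 2 ^ n * 2 ^ α * (A * B * (((1 + b ^ 2) ^ k : ℝ)⁻¹ * b ^ (-α))) := by
        apply mul_le_mul_of_nonneg_left _ (by positivity)
        apply mul_le_mul_of_nonneg_right _ hw
        exact mul_le_mul hA hB hTb hA0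

theorem convolution_weighted_bound_same_alpha (d : ℕ) (hd : 2 ≤ d) (α : ℝ)
    (hα0 : 0 < α) (hαd : α < d) (n : ℕ) :
    ∃ C : ℝ, 0 < C ∧
      ∀ φ ψ : EuclideanSpace ℝ (Fin d) → ℂ, Measurable φ → Measurable ψ →
        (∀ m : ℕ, BddAbove (Set.range fun ξ : EuclideanSpace ℝ (Fin d) =>
          (1 + ‖ξ‖ ^ 2) ^ m * (‖ξ‖ ^ α * ‖φ ξ‖))) →
        (∀ m : ℕ, BddAbove (Set.range fun ξ : EuclideanSpace ℝ (Fin d) =>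
          (1 + ‖ξ‖ ^ 2) ^ m * (‖ξ‖ ^ α * ‖ψ ξ‖))) →
        ∀ ξ : EuclideanSpace ℝ (Fin d),
          (1 + ‖ξ‖ ^ 2) ^ n * (‖ξ‖ ^ α * ‖∫ η, φ (ξ - η) * ψ η‖) ≤
            C * (weightedSup d α n φ * weightedSup d α (n + d / 2 + 1) ψ +
              weightedSup d α (n + d / 2 + 1) φ * weightedSup d α n ψ) := by
  haveI : NeZero d := ⟨by omega⟩
  have hfun : ∀ y : EuclideanSpace ℝ (Fin d),
      (0:ℝ) ≤ ((1 + ‖y‖ ^ 2) ^ (d / 2 + 1) : ℝ)⁻¹ * ‖y‖ ^ (-α) := fun y => by positivity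
  have hInt : Integrable (fun x : EuclideanSpace ℝ (Fin d) =>
      ((1 + ‖x‖ ^ 2) ^ (d / 2 + 1) : ℝ)⁻¹ * ‖x‖ ^ (-α)) := aux_int_h hd hα0 hαd
  set h : EuclideanSpace ℝ (Fin d) → ℝ :=
    fun x => ((1 + ‖x‖ ^ 2) ^ (d / 2 + 1) : ℝ)⁻¹ * ‖x‖ ^ (-α) with hh
  have hI0 : 0 ≤ ∫ x, h x := integral_nonneg hfun
  refine ⟨2 ^ n * 2 ^ α * ((∫ x, h x) + 1), by positivity, ?_⟩
  intro φ ψ hφ hψ hφb hψb ξ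
  have hsupφ : ∀ (m : ℕ) ζ, (1 + ‖ζ‖ ^ 2) ^ m * (‖ζ‖ ^ α * ‖φ ζ‖) ≤ weightedSup d α m φ :=
    fun m ζ => le_ciSup (hφb m) ζ
  have hsupψ : ∀ (m : ℕ) ζ, (1 + ‖ζ‖ ^ 2) ^ m * (‖ζ‖ ^ α * ‖ψ ζ‖) ≤ weightedSup d α m ψ :=
    fun m ζ => le_ciSup (hψb m) ζ
  have hφ0 : ∀ m, 0 ≤ weightedSup d α m φ := fun m => le_trans (by positivity) (hsupφ m 0)
  have hψ0 : ∀ m, 0 ≤ weightedSup d α m ψ := fun m => le_trans (by positivity) (hsupψ m 0)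
  have hP1 : 0 ≤ weightedSup d α n φ * weightedSup d α (n + d / 2 + 1) ψ :=
    mul_nonneg (hφ0 n) (hψ0 _)
  have hP2 : 0 ≤ weightedSup d α (n + d / 2 + 1) φ * weightedSup d α n ψ :=
    mul_nonneg (hφ0 _) (hψ0 n)
  set g : EuclideanSpace ℝ (Fin d) → ℝ := fun η =>
    2 ^ n * 2 ^ α * ((weightedSup d α n φ * weightedSup d α (n + d / 2 + 1) ψ) * h η +
      (weightedSup d α (n + d / 2 + 1) φ * weightedSup d α n ψ) * h (ξ - η)) with hg
  have hgInt : Integrable g := by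
    rw [hg]
    exact ((hInt.const_mul _).add ((hInt.comp_sub_left ξ).const_mul _)).const_mul _
  have hmain : (1 + ‖ξ‖ ^ 2) ^ n * (‖ξ‖ ^ α * ‖∫ η, φ (ξ - η) * ψ η‖) ≤ ∫ η, g η := by
    calc (1 + ‖ξ‖ ^ 2) ^ n * (‖ξ‖ ^ α * ‖∫ η, φ (ξ - η) * ψ η‖)
        ≤ (1 + ‖ξ‖ ^ 2) ^ n * (‖ξ‖ ^ α * ∫ η, ‖φ (ξ - η) * ψ η‖) := by
          apply mul_le_mul_of_nonneg_left _ (by positivity)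
          exact mul_le_mul_of_nonneg_left
            (norm_integral_le_integral_norm (fun η => φ (ξ - η) * ψ η))
            (Real.rpow_nonneg (norm_nonneg ξ) α)
      _ = ∫ η, (1 + ‖ξ‖ ^ 2) ^ n * (‖ξ‖ ^ α * ‖φ (ξ - η) * ψ η‖) := by
          rw [integral_const_mul, integral_const_mul]
      _ ≤ ∫ η, g η := by
          apply integral_mono_of_nonneg
          · filter_upwards with η
            positivity
          · exact hgInt
          · have hae : ∀ᵐ η : EuclideanSpace ℝ (Fin d),
                η ∉ ({0, ξ} : Set (EuclideanSpace ℝ (Fin d))) :=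
              measure_eq_zero_iff_ae_notMem.1
                (Set.Finite.measure_zero ((Set.finite_singleton ξ).insert 0) _)
            filter_upwards [hae] with η hη
            simp only [Set.mem_insert_iff, Set.mem_singleton_iff, not_or] at hη
            obtain ⟨hη0, hηξ⟩ := hη
            have hb0 : 0 < ‖η‖ := norm_pos_iff.2 hη0
            have ha0 : 0 < ‖ξ - η‖ := norm_pos_iff.2 (sub_ne_zero.2 (Ne.symm hηξ))
            simp only [norm_mul]
            have hgη : g η = 2 ^ n * 2 ^ α *
                ((weightedSup d α n φ * weightedSup d α (n + d / 2 + 1) ψ) * h η +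
                  (weightedSup d α (n + d / 2 + 1) φ * weightedSup d α n ψ) * h (ξ - η)) := rfl
            rcases le_total ‖η‖ ‖ξ - η‖ with hcase | hcase
            · have hcab : ‖ξ‖ ≤ ‖ξ - η‖ + ‖η‖ := by
                calc ‖ξ‖ = ‖(ξ - η) + η‖ := by rw [sub_add_cancel]
                  _ ≤ ‖ξ - η‖ + ‖η‖ := norm_add_le _ _
              have hkey := aux_key n (d / 2 + 1) hα0 (norm_nonneg (φ (ξ - η)))
                (norm_nonneg (ψ η)) hb0 (norm_nonneg ξ) hcab hcase
                (hsupφ n (ξ - η)) (hsupψ (n + d / 2 + 1) η)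
              refine hkey.trans ?_
              rw [hgη]
              apply mul_le_mul_of_nonneg_left _ (by positivity)
              have hterm : 0 ≤ (weightedSup d α (n + d / 2 + 1) φ * weightedSup d α n ψ) *
                  h (ξ - η) := mul_nonneg hP2 (hfun _)
              have hheq : ((1 + ‖η‖ ^ 2) ^ (d / 2 + 1) : ℝ)⁻¹ * ‖η‖ ^ (-α) = h η := rfl
              rw [hheq]
              linarith
            · have hcab : ‖ξ‖ ≤ ‖η‖ + ‖ξ - η‖ := by
                calc ‖ξ‖ = ‖η + (ξ - η)‖ := by rw [add_sub_cancel]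
                  _ ≤ ‖η‖ + ‖ξ - η‖ := norm_add_le _ _
              have hkey := aux_key n (d / 2 + 1) hα0 (norm_nonneg (ψ η))
                (norm_nonneg (φ (ξ - η))) ha0 (norm_nonneg ξ) hcab hcase
                (hsupψ n η) (hsupφ (n + d / 2 + 1) (ξ - η))
              have hcomm : (1 + ‖ξ‖ ^ 2) ^ n * (‖ξ‖ ^ α * (‖φ (ξ - η)‖ * ‖ψ η‖)) =
                  (1 + ‖ξ‖ ^ 2) ^ n * (‖ξ‖ ^ α * (‖ψ η‖ * ‖φ (ξ - η)‖)) := by ring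
              rw [hcomm]
              refine hkey.trans ?_
              rw [hgη]
              apply mul_le_mul_of_nonneg_left _ (by positivity)
              have hterm : 0 ≤ (weightedSup d α n φ * weightedSup d α (n + d / 2 + 1) ψ) *
                  h η := mul_nonneg hP1 (hfun _)
              have hheq : ((1 + ‖ξ - η‖ ^ 2) ^ (d / 2 + 1) : ℝ)⁻¹ * ‖ξ - η‖ ^ (-α) =
                  h (ξ - η) := rfl
              rw [hheq]
              nlinarith [hfun (ξ - η)]
  have hgval : ∫ η, g η = 2 ^ n * 2 ^ α *
      ((weightedSup d α n φ * weightedSup d α (n + d / 2 + 1) ψ) * (∫ x, h x) +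
        (weightedSup d α (n + d / 2 + 1) φ * weightedSup d α n ψ) * (∫ x, h x)) := by
    rw [hg]
    rw [integral_const_mul, integral_add ((hInt.const_mul _)) ((hInt.comp_sub_left ξ).const_mul _),
      integral_const_mul, integral_const_mul, integral_sub_left_eq_self h volume ξ]
  refine hmain.trans ?_
  rw [hgval]
  have hc0 : (0:ℝ) ≤ 2 ^ n * 2 ^ α := by positivity
  nlinarith [mul_nonneg hc0 (add_nonneg hP1 hP2), hI0, hP1, hP2]
end

section
/- Let d ≥ 2, let α, β ≥ 0 with α + β < d, and let n ∈ ℕ; set k := ⌊d/2⌋ + 1. Then there exists a constant C > 0, depending only on d, α, β and n, with the following property: if φ, ψ : ℝ^d → ℂ are measurable functions such that p_m(|·|^α φ) := sup_{ξ}(1+|ξ|²)^m |ξ|^α |φ(ξ)| and p_m(|·|^β ψ) := sup_{ξ}(1+|ξ|²)^m |ξ|^β |ψ(ξ)| are finite for every m ∈ ℕ, then for every ξ ∈ ℝ^d, (1+|ξ|²)^n |(φ∗ψ)(ξ)| ≤ C·( p_n(|·|^α φ)·p_{n+k}(|·|^β ψ) + p_{n+k}(|·|^α φ)·p_n(|·|^β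 ψ) ). -/
open MeasureTheory Set

lemma integrableOn_norm_rpow_ball {d : ℕ} (hd : 2 ≤ d) {γ : ℝ} (hγ0 : 0 ≤ γ) (hγ : γ < d) :
    IntegrableOn (fun x : EuclideanSpace ℝ (Fin d) => ‖x‖ ^ (-γ))
      (Metric.ball (0 : EuclideanSpace ℝ (Fin d)) 1) := by
  rcases eq_or_lt_of_le hγ0 with h0 | hγpos
  · simp only [← h0, neg_zero, Real.rpow_zero]
    exact integrableOn_const measure_ball_lt_top.ne
  haveI : Nonempty (Fin d) := ⟨⟨0, by omega⟩⟩
  set E := EuclideanSpace ℝ (Fin d)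
  set μ' := volume.restrict (Metric.ball (0 : E) 1) with hμ'
  set mB := volume (Metric.ball (0 : E) 1) with hmBdef
  have hmB : mB < ⊤ := measure_ball_lt_top
  have hmeas : Measurable (fun x : E => ‖x‖ ^ (-γ)) := by fun_prop
  constructor
  · exact hmeas.aestronglyMeasurable
  · rw [HasFiniteIntegral,
      lintegral_enorm_of_nonneg (fun x => Real.rpow_nonneg (norm_nonneg _) _),
      lintegral_eq_lintegral_meas_le μ'
        (Filter.Eventually.of_forall (fun x => Real.rpow_nonneg (norm_nonneg _) _))
        hmeas.aemeasurable]
    have key : ∀ t : ℝ, 0 < t →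
        μ' {a : E | t ≤ ‖a‖ ^ (-γ)} ≤
          min mB (ENNReal.ofReal (t ^ (-γ⁻¹ * d)) * mB) := by
      intro t ht
      refine le_min ?_ ?_
      · exact (measure_mono (subset_univ _)).trans_eq (by rw [hμ', Measure.restrict_apply_univ])
      · have hsub : {a : E | t ≤ ‖a‖ ^ (-γ)} ⊆ Metric.closedBall 0 (t ^ (-γ⁻¹)) := by
          intro a ha
          simp only [mem_setOf_eq] at ha
          have ha0 : (0:ℝ) < ‖a‖ := by
            rcases eq_or_lt_of_le (norm_nonneg a) with h | h
            · rw [← h, Real.zero_rpow (neg_ne_zero.2 hγpos.ne')] at ha; linarith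
            · exact h
          have h1 : (‖a‖ ^ (-γ)) ^ (-γ⁻¹) ≤ t ^ (-γ⁻¹) :=
            Real.rpow_le_rpow_of_nonpos ht ha (neg_nonpos.2 (inv_nonneg.2 hγpos.le))
          rw [← Real.rpow_mul (norm_nonneg a), neg_mul_neg,
            mul_inv_cancel₀ hγpos.ne', Real.rpow_one] at h1
          simpa [Metric.mem_closedBall, dist_zero_right] using h1
        calc μ' {a : E | t ≤ ‖a‖ ^ (-γ)}
            ≤ volume (Metric.closedBall (0 : E) (t ^ (-γ⁻¹))) :=
              (Measure.restrict_apply_le _ _).trans (measure_mono hsub)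
          _ = ENNReal.ofReal ((t ^ (-γ⁻¹)) ^ d) * mB := by
              rw [Measure.addHaar_closedBall _ _ (by positivity), finrank_euclideanSpace_fin]
          _ = ENNReal.ofReal (t ^ (-γ⁻¹ * d)) * mB := by
              rw [← Real.rpow_natCast (t ^ (-γ⁻¹)) d, ← Real.rpow_mul ht.le]
    calc ∫⁻ t in Ioi (0:ℝ), μ' {a : E | t ≤ ‖a‖ ^ (-γ)}
        ≤ ∫⁻ t in Ioc 0 1 ∪ Ioi 1, μ' {a : E | t ≤ ‖a‖ ^ (-γ)} :=
          lintegral_mono_set Ioi_subset_Ioc_union_Ioi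
      _ ≤ (∫⁻ t in Ioc (0:ℝ) 1, μ' {a : E | t ≤ ‖a‖ ^ (-γ)}) +
          ∫⁻ t in Ioi (1:ℝ), μ' {a : E | t ≤ ‖a‖ ^ (-γ)} := lintegral_union_le _ _ _
      _ < ⊤ := by
          refine ENNReal.add_lt_top.2 ⟨?_, ?_⟩
          · calc (∫⁻ t in Ioc (0:ℝ) 1, μ' {a : E | t ≤ ‖a‖ ^ (-γ)})
                ≤ ∫⁻ _ in Ioc (0:ℝ) 1, mB :=
                  setLIntegral_mono' measurableSet_Ioc
                    (fun t ht => (key t ht.1).trans (min_le_left _ _))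
              _ = mB * volume (Ioc (0:ℝ) 1) := setLIntegral_const _ _
              _ < ⊤ := ENNReal.mul_lt_top hmB measure_Ioc_lt_top
          · have hexp : -γ⁻¹ * d < -1 := by
              have h1 : 1 < (d:ℝ) / γ := (one_lt_div hγpos).2 hγ
              have h2 : γ⁻¹ * d = (d:ℝ) / γ := by field_simp
              nlinarith
            calc (∫⁻ t in Ioi (1:ℝ), μ' {a : E | t ≤ ‖a‖ ^ (-γ)})
                ≤ ∫⁻ t in Ioi (1:ℝ), ENNReal.ofReal (t ^ (-γ⁻¹ * d)) * mB :=
                  setLIntegral_mono' measurableSet_Ioi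
                    (fun t ht => (key t (lt_trans one_pos ht)).trans (min_le_right _ _))
              _ = (∫⁻ t in Ioi (1:ℝ), ENNReal.ofReal (t ^ (-γ⁻¹ * d))) * mB :=
                  lintegral_mul_const' _ _ hmB.ne
              _ < ⊤ := ENNReal.mul_lt_top
                  (integrableOn_Ioi_rpow_of_lt hexp one_pos).setLIntegral_lt_top hmB

lemma integrable_singular_weight {d : ℕ} (hd : 2 ≤ d) {γ : ℝ} (hγ0 : 0 ≤ γ) (hγ : γ < d)
    (k : ℕ) (hk : (d : ℝ) < 2 * k) :
    Integrable (fun x : EuclideanSpace ℝ (Fin d) =>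
      ‖x‖ ^ (-γ) * (((1 + ‖x‖ ^ 2) ^ k : ℝ))⁻¹) := by
  set E := EuclideanSpace ℝ (Fin d)
  set f : E → ℝ := fun x => ‖x‖ ^ (-γ) * (((1 + ‖x‖ ^ 2) ^ k : ℝ))⁻¹ with hf
  have hfm : Measurable f := by fun_prop (disch := intro x; positivity)
  have hfnn : ∀ x, 0 ≤ f x := fun x => by positivity
  have hout : Integrable (fun x : E => (((1 + ‖x‖ ^ 2) ^ k : ℝ))⁻¹) := by
    have h1 : Integrable (fun x : E => ((1 : ℝ) + ‖x‖ ^ 2) ^ (-(2 * k : ℝ) / 2)) :=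
      integrable_rpow_neg_one_add_norm_sq (by rw [finrank_euclideanSpace_fin]; exact hk)
    have heq : ∀ x : E, ((1 : ℝ) + ‖x‖ ^ 2) ^ (-(2 * k : ℝ) / 2)
        = (((1 + ‖x‖ ^ 2) ^ k : ℝ))⁻¹ := by
      intro x
      have hpos : (0:ℝ) < 1 + ‖x‖ ^ 2 := by positivity
      rw [show (-(2 * k : ℝ) / 2) = -(k : ℝ) by ring, Real.rpow_neg hpos.le,
        Real.rpow_natCast]
    simpa only [heq] using h1
  rw [← integrableOn_univ, ← union_compl_self (Metric.ball (0 : E) 1)]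
  refine IntegrableOn.union ?_ ?_
  · refine ((integrableOn_norm_rpow_ball hd hγ0 hγ)).mono' hfm.aestronglyMeasurable ?_
    refine Filter.Eventually.of_forall fun x => ?_
    rw [Real.norm_of_nonneg (hfnn x)]
    have h2 : (((1 + ‖x‖ ^ 2) ^ k : ℝ))⁻¹ ≤ 1 := by
      rw [inv_le_one_iff₀]
      right
      exact one_le_pow₀ (by nlinarith [sq_nonneg ‖x‖])
    calc f x ≤ ‖x‖ ^ (-γ) * 1 :=
          mul_le_mul_of_nonneg_left h2 (Real.rpow_nonneg (norm_nonneg _) _)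
      _ = ‖x‖ ^ (-γ) := mul_one _
  · refine (hout.integrableOn).mono' hfm.aestronglyMeasurable ?_
    refine (ae_restrict_iff' (measurableSet_ball.compl)).2
      (Filter.Eventually.of_forall fun x hx => ?_)
    rw [Real.norm_of_nonneg (hfnn x)]
    have hx1 : (1:ℝ) ≤ ‖x‖ := by
      simp only [mem_compl_iff, Metric.mem_ball, dist_zero_right, not_lt] at hx
      exact hx
    have h3 : ‖x‖ ^ (-γ) ≤ 1 :=
      Real.rpow_le_one_of_one_le_of_nonpos hx1 (neg_nonpos.2 hγ0)
    calc f x ≤ 1 * (((1 + ‖x‖ ^ 2) ^ k : ℝ))⁻¹ :=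
          mul_le_mul_of_nonneg_right h3 (by positivity)
      _ = (((1 + ‖x‖ ^ 2) ^ k : ℝ))⁻¹ := one_mul _

theorem convolution_weighted_bound_two_exponents (d : ℕ) (hd : 2 ≤ d) (α β : ℝ)
    (hα : 0 ≤ α) (hβ : 0 ≤ β) (hαβ : α + β < d) (n : ℕ) :
    ∃ C : ℝ, 0 < C ∧
      ∀ φ ψ : EuclideanSpace ℝ (Fin d) → ℂ, Measurable φ → Measurable ψ →
        (∀ m : ℕ, BddAbove (Set.range fun ξ : EuclideanSpace ℝ (Fin d) =>
          (1 + ‖ξ‖ ^ 2) ^ m * (‖ξ‖ ^ α * ‖φ ξ‖))) →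
        (∀ m : ℕ, BddAbove (Set.range fun ξ : EuclideanSpace ℝ (Fin d) =>
          (1 + ‖ξ‖ ^ 2) ^ m * (‖ξ‖ ^ β * ‖ψ ξ‖))) →
        ∀ ξ : EuclideanSpace ℝ (Fin d),
          (1 + ‖ξ‖ ^ 2) ^ n * ‖∫ η, φ (ξ - η) * ψ η‖ ≤
            C * (weightedSup d α n φ * weightedSup d β (n + d / 2 + 1) ψ +
              weightedSup d α (n + d / 2 + 1) φ * weightedSup d β n ψ) := by
  haveI : Nonempty (Fin d) := ⟨⟨0, by omega⟩⟩
  set k : ℕ := d / 2 + 1 with hkdef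
  have hkd : (d : ℝ) < 2 * k := by
    have : d < 2 * k := by omega
    exact_mod_cast this
  set g : EuclideanSpace ℝ (Fin d) → ℝ := fun x => ‖x‖ ^ (-(α + β)) * (((1 + ‖x‖ ^ 2) ^ k : ℝ))⁻¹ with hgdef
  have hg : Integrable g :=
    integrable_singular_weight hd (by linarith) hαβ k hkd
  have hgnn : ∀ x, 0 ≤ g x := fun x => by positivity
  set I : ℝ := ∫ x, g x with hIdef
  have hI0 : 0 ≤ I := integral_nonneg hgnn
  refine ⟨2 ^ n * (I + 1), by positivity, ?_⟩
  intro φ ψ hφm hψm hBφ hBψ ξ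
  set P : ℕ → ℝ := fun m => weightedSup d α m φ with hPdef
  set Q : ℕ → ℝ := fun m => weightedSup d β m ψ with hQdef
  have hPle : ∀ (m : ℕ) (η : EuclideanSpace ℝ (Fin d)), (1 + ‖η‖ ^ 2) ^ m * (‖η‖ ^ α * ‖φ η‖) ≤ P m :=
    fun m η => le_ciSup (hBφ m) η
  have hQle : ∀ (m : ℕ) (η : EuclideanSpace ℝ (Fin d)), (1 + ‖η‖ ^ 2) ^ m * (‖η‖ ^ β * ‖ψ η‖) ≤ Q m :=
    fun m η => le_ciSup (hBψ m) η
  have hP0 : ∀ m, 0 ≤ P m := fun m => le_trans (by positivity) (hPle m 0)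
  have hQ0 : ∀ m, 0 ≤ Q m := fun m => le_trans (by positivity) (hQle m 0)
  -- pointwise bounds for φ and ψ away from the singular points
  have hφbd : ∀ (m : ℕ) (ζ : EuclideanSpace ℝ (Fin d)), ζ ≠ 0 →
      (1 + ‖ζ‖ ^ 2) ^ m * ‖φ ζ‖ ≤ P m * ‖ζ‖ ^ (-α) := by
    intro m ζ hζ
    have hz : (0:ℝ) < ‖ζ‖ := norm_pos_iff.2 hζ
    have hcancel : ‖ζ‖ ^ α * ‖ζ‖ ^ (-α) = 1 := by
      rw [← Real.rpow_add hz]; simp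
    calc (1 + ‖ζ‖ ^ 2) ^ m * ‖φ ζ‖
        = (1 + ‖ζ‖ ^ 2) ^ m * ‖φ ζ‖ * (‖ζ‖ ^ α * ‖ζ‖ ^ (-α)) := by rw [hcancel, mul_one]
      _ = ((1 + ‖ζ‖ ^ 2) ^ m * (‖ζ‖ ^ α * ‖φ ζ‖)) * ‖ζ‖ ^ (-α) := by ring
      _ ≤ P m * ‖ζ‖ ^ (-α) :=
          mul_le_mul_of_nonneg_right (hPle m ζ) (Real.rpow_nonneg hz.le _)
  have hψbd : ∀ (m : ℕ) (ζ : EuclideanSpace ℝ (Fin d)), ζ ≠ 0 →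
      (1 + ‖ζ‖ ^ 2) ^ m * ‖ψ ζ‖ ≤ Q m * ‖ζ‖ ^ (-β) := by
    intro m ζ hζ
    have hz : (0:ℝ) < ‖ζ‖ := norm_pos_iff.2 hζ
    have hcancel : ‖ζ‖ ^ β * ‖ζ‖ ^ (-β) = 1 := by
      rw [← Real.rpow_add hz]; simp
    calc (1 + ‖ζ‖ ^ 2) ^ m * ‖ψ ζ‖
        = (1 + ‖ζ‖ ^ 2) ^ m * ‖ψ ζ‖ * (‖ζ‖ ^ β * ‖ζ‖ ^ (-β)) := by rw [hcancel, mul_one]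
      _ = ((1 + ‖ζ‖ ^ 2) ^ m * (‖ζ‖ ^ β * ‖ψ ζ‖)) * ‖ζ‖ ^ (-β) := by ring
      _ ≤ Q m * ‖ζ‖ ^ (-β) :=
          mul_le_mul_of_nonneg_right (hQle m ζ) (Real.rpow_nonneg hz.le _)
  set G : EuclideanSpace ℝ (Fin d) → ℝ := fun η =>
    2 ^ n * (P n * Q (n + d / 2 + 1) * g η + P (n + d / 2 + 1) * Q n * g (ξ - η)) with hGdef
  have hGint : Integrable G := by
    refine Integrable.const_mul ?_ _
    exact (hg.const_mul _).add ((hg.comp_sub_left ξ).const_mul _)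
  -- a.e. pointwise bound
  have hae : ∀ᵐ η : EuclideanSpace ℝ (Fin d), (1 + ‖ξ‖ ^ 2) ^ n * (‖φ (ξ - η)‖ * ‖ψ η‖) ≤ G η := by
    have h0 : ∀ᵐ η : EuclideanSpace ℝ (Fin d), η ≠ 0 := by
      rw [ae_iff]
      simp only [ne_eq, not_not, setOf_eq_eq_singleton]
      exact measure_singleton 0
    have hξ0 : ∀ᵐ η : EuclideanSpace ℝ (Fin d), η ≠ ξ := by
      rw [ae_iff]
      simp only [ne_eq, not_not, setOf_eq_eq_singleton]
      exact measure_singleton ξ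
    filter_upwards [h0, hξ0] with η hη0 hηξ
    have hsub : ξ - η ≠ 0 := sub_ne_zero.2 (Ne.symm hηξ)
    set a : ℝ := ‖ξ - η‖ with hadef
    set b : ℝ := ‖η‖ with hbdef
    have ha : (0:ℝ) < a := norm_pos_iff.2 hsub
    have hb : (0:ℝ) < b := norm_pos_iff.2 hη0
    have peetre : (1 + ‖ξ‖ ^ 2) ^ n ≤ 2 ^ n * ((1 + a ^ 2) ^ n * (1 + b ^ 2) ^ n) := by
      have h3 : ‖ξ‖ ≤ a + b := by
        calc ‖ξ‖ = ‖(ξ - η) + η‖ := by rw [sub_add_cancel]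
          _ ≤ a + b := norm_add_le _ _
      have hbase : 1 + ‖ξ‖ ^ 2 ≤ 2 * ((1 + a ^ 2) * (1 + b ^ 2)) := by
        nlinarith [sq_nonneg (a - b), sq_nonneg (a * b), norm_nonneg ξ, sq_nonneg (a + b)]
      calc (1 + ‖ξ‖ ^ 2) ^ n ≤ (2 * ((1 + a ^ 2) * (1 + b ^ 2))) ^ n :=
            pow_le_pow_left₀ (by positivity) hbase n
        _ = 2 ^ n * ((1 + a ^ 2) ^ n * (1 + b ^ 2) ^ n) := by rw [mul_pow, mul_pow]
    have hsplitψ : (1 + b ^ 2) ^ n * ‖ψ η‖ ≤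
        Q (n + d / 2 + 1) * b ^ (-β) * (((1 + b ^ 2) ^ k : ℝ))⁻¹ := by
      have h4 := hψbd (n + d / 2 + 1) η hη0
      have hpk : ((1 + b ^ 2) ^ k : ℝ) ≠ 0 := by positivity
      have hexp : (1 + b ^ 2) ^ (n + d / 2 + 1) = (1 + b ^ 2) ^ n * (1 + b ^ 2) ^ k := by
        rw [← pow_add, hkdef, ← Nat.add_assoc]
      rw [hexp] at h4
      calc (1 + b ^ 2) ^ n * ‖ψ η‖
          = ((1 + b ^ 2) ^ n * ‖ψ η‖ * (1 + b ^ 2) ^ k) * (((1 + b ^ 2) ^ k : ℝ))⁻¹ :=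
            (mul_inv_cancel_right₀ hpk _).symm
        _ ≤ Q (n + d / 2 + 1) * b ^ (-β) * (((1 + b ^ 2) ^ k : ℝ))⁻¹ := by
            refine mul_le_mul_of_nonneg_right ?_ (by positivity)
            calc (1 + b ^ 2) ^ n * ‖ψ η‖ * (1 + b ^ 2) ^ k
                = (1 + b ^ 2) ^ n * (1 + b ^ 2) ^ k * ‖ψ η‖ := by ring
              _ ≤ _ := h4
    have hsplitφ : (1 + a ^ 2) ^ n * ‖φ (ξ - η)‖ ≤
        P (n + d / 2 + 1) * a ^ (-α) * (((1 + a ^ 2) ^ k : ℝ))⁻¹ := by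
      have h4 := hφbd (n + d / 2 + 1) (ξ - η) hsub
      have hpk : ((1 + a ^ 2) ^ k : ℝ) ≠ 0 := by positivity
      have hexp : (1 + a ^ 2) ^ (n + d / 2 + 1) = (1 + a ^ 2) ^ n * (1 + a ^ 2) ^ k := by
        rw [← pow_add, hkdef, ← Nat.add_assoc]
      rw [hexp] at h4
      calc (1 + a ^ 2) ^ n * ‖φ (ξ - η)‖
          = ((1 + a ^ 2) ^ n * ‖φ (ξ - η)‖ * (1 + a ^ 2) ^ k) * (((1 + a ^ 2) ^ k : ℝ))⁻¹ :=
            (mul_inv_cancel_right₀ hpk _).symm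
        _ ≤ P (n + d / 2 + 1) * a ^ (-α) * (((1 + a ^ 2) ^ k : ℝ))⁻¹ := by
            refine mul_le_mul_of_nonneg_right ?_ (by positivity)
            calc (1 + a ^ 2) ^ n * ‖φ (ξ - η)‖ * (1 + a ^ 2) ^ k
                = (1 + a ^ 2) ^ n * (1 + a ^ 2) ^ k * ‖φ (ξ - η)‖ := by ring
              _ ≤ _ := h4
    rcases le_total b a with hba | hab
    · -- |η| ≤ |ξ - η| : use g η
      have hmono : a ^ (-α) ≤ b ^ (-α) :=
        Real.rpow_le_rpow_of_nonpos hb hba (neg_nonpos.2 hα)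
      have t1 : (1 + a ^ 2) ^ n * ‖φ (ξ - η)‖ ≤ P n * a ^ (-α) := hφbd n _ hsub
      have t2 := hsplitψ
      have hmain : (1 + ‖ξ‖ ^ 2) ^ n * (‖φ (ξ - η)‖ * ‖ψ η‖) ≤
          2 ^ n * (P n * Q (n + d / 2 + 1) * g η) := by
        calc (1 + ‖ξ‖ ^ 2) ^ n * (‖φ (ξ - η)‖ * ‖ψ η‖)
            ≤ (2 ^ n * ((1 + a ^ 2) ^ n * (1 + b ^ 2) ^ n)) * (‖φ (ξ - η)‖ * ‖ψ η‖) :=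
              mul_le_mul_of_nonneg_right peetre (by positivity)
          _ = 2 ^ n * (((1 + a ^ 2) ^ n * ‖φ (ξ - η)‖) * ((1 + b ^ 2) ^ n * ‖ψ η‖)) := by
              ring
          _ ≤ 2 ^ n * ((P n * a ^ (-α)) *
              (Q (n + d / 2 + 1) * b ^ (-β) * (((1 + b ^ 2) ^ k : ℝ))⁻¹)) := by
              refine mul_le_mul_of_nonneg_left ?_ (by positivity)
              exact mul_le_mul t1 t2 (by positivity) (mul_nonneg (hP0 n) (Real.rpow_nonneg ha.le _))
          _ ≤ 2 ^ n * ((P n * b ^ (-α)) *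
              (Q (n + d / 2 + 1) * b ^ (-β) * (((1 + b ^ 2) ^ k : ℝ))⁻¹)) := by
              refine mul_le_mul_of_nonneg_left ?_ (by positivity)
              refine mul_le_mul_of_nonneg_right ?_
                (mul_nonneg (mul_nonneg (hQ0 _) (Real.rpow_nonneg hb.le _)) (by positivity))
              exact mul_le_mul_of_nonneg_left hmono (hP0 n)
          _ = 2 ^ n * (P n * Q (n + d / 2 + 1) * g η) := by
              have hbb : b ^ (-α) * b ^ (-β) = b ^ (-(α + β)) := by
                rw [← Real.rpow_add hb]; ring_nf
              have : g η = b ^ (-(α + β)) * (((1 + b ^ 2) ^ k : ℝ))⁻¹ := rfl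
              rw [this, ← hbb]; ring
      have hnn : 0 ≤ P (n + d / 2 + 1) * Q n * g (ξ - η) :=
        mul_nonneg (mul_nonneg (hP0 _) (hQ0 _)) (hgnn _)
      calc (1 + ‖ξ‖ ^ 2) ^ n * (‖φ (ξ - η)‖ * ‖ψ η‖)
          ≤ 2 ^ n * (P n * Q (n + d / 2 + 1) * g η) := hmain
        _ ≤ G η :=
            mul_le_mul_of_nonneg_left (le_add_of_nonneg_right hnn) (by positivity)
    · -- |ξ - η| ≤ |η| : use g (ξ - η)
      have hmono : b ^ (-β) ≤ a ^ (-β) :=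
        Real.rpow_le_rpow_of_nonpos ha hab (neg_nonpos.2 hβ)
      have t1 : (1 + b ^ 2) ^ n * ‖ψ η‖ ≤ Q n * b ^ (-β) := hψbd n _ hη0
      have t2 := hsplitφ
      have hmain : (1 + ‖ξ‖ ^ 2) ^ n * (‖φ (ξ - η)‖ * ‖ψ η‖) ≤
          2 ^ n * (P (n + d / 2 + 1) * Q n * g (ξ - η)) := by
        calc (1 + ‖ξ‖ ^ 2) ^ n * (‖φ (ξ - η)‖ * ‖ψ η‖)
            ≤ (2 ^ n * ((1 + a ^ 2) ^ n * (1 + b ^ 2) ^ n)) * (‖φ (ξ - η)‖ * ‖ψ η‖) :=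
              mul_le_mul_of_nonneg_right peetre (by positivity)
          _ = 2 ^ n * (((1 + a ^ 2) ^ n * ‖φ (ξ - η)‖) * ((1 + b ^ 2) ^ n * ‖ψ η‖)) := by
              ring
          _ ≤ 2 ^ n * ((P (n + d / 2 + 1) * a ^ (-α) * (((1 + a ^ 2) ^ k : ℝ))⁻¹) *
              (Q n * b ^ (-β))) := by
              refine mul_le_mul_of_nonneg_left ?_ (by positivity)
              exact mul_le_mul t2 t1 (by positivity) (mul_nonneg (mul_nonneg (hP0 _) (Real.rpow_nonneg ha.le _)) (by positivity))
          _ ≤ 2 ^ n * ((P (n + d / 2 + 1) * a ^ (-α) * (((1 + a ^ 2) ^ k : ℝ))⁻¹) *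
              (Q n * a ^ (-β))) := by
              refine mul_le_mul_of_nonneg_left ?_ (by positivity)
              refine mul_le_mul_of_nonneg_left ?_
                (mul_nonneg (mul_nonneg (hP0 _) (Real.rpow_nonneg ha.le _)) (by positivity))
              exact mul_le_mul_of_nonneg_left hmono (hQ0 n)
          _ = 2 ^ n * (P (n + d / 2 + 1) * Q n * g (ξ - η)) := by
              have hbb : a ^ (-α) * a ^ (-β) = a ^ (-(α + β)) := by
                rw [← Real.rpow_add ha]; ring_nf
              have : g (ξ - η) = a ^ (-(α + β)) * (((1 + a ^ 2) ^ k : ℝ))⁻¹ := rfl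
              rw [this, ← hbb]; ring
      have hnn : 0 ≤ P n * Q (n + d / 2 + 1) * g η :=
        mul_nonneg (mul_nonneg (hP0 _) (hQ0 _)) (hgnn _)
      calc (1 + ‖ξ‖ ^ 2) ^ n * (‖φ (ξ - η)‖ * ‖ψ η‖)
          ≤ 2 ^ n * (P (n + d / 2 + 1) * Q n * g (ξ - η)) := hmain
        _ ≤ G η :=
            mul_le_mul_of_nonneg_left (le_add_of_nonneg_left hnn) (by positivity)
  -- assemble
  calc (1 + ‖ξ‖ ^ 2) ^ n * ‖∫ η, φ (ξ - η) * ψ η‖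
      ≤ (1 + ‖ξ‖ ^ 2) ^ n * ∫ η, ‖φ (ξ - η)‖ * ‖ψ η‖ := by
        refine mul_le_mul_of_nonneg_left ?_ (by positivity)
        calc ‖∫ η, φ (ξ - η) * ψ η‖ ≤ ∫ η, ‖φ (ξ - η) * ψ η‖ :=
              norm_integral_le_integral_norm _
          _ = ∫ η, ‖φ (ξ - η)‖ * ‖ψ η‖ := by simp only [norm_mul]
    _ = ∫ η, (1 + ‖ξ‖ ^ 2) ^ n * (‖φ (ξ - η)‖ * ‖ψ η‖) := (integral_const_mul _ _).symm
    _ ≤ ∫ η, G η :=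
        integral_mono_of_nonneg (Filter.Eventually.of_forall fun η => by positivity) hGint hae
    _ = 2 ^ n * (P n * Q (n + d / 2 + 1) * I + P (n + d / 2 + 1) * Q n * I) := by
        rw [hGdef]
        rw [integral_const_mul, integral_add (hg.const_mul _) ((hg.comp_sub_left ξ).const_mul _),
          integral_const_mul, integral_const_mul, integral_sub_left_eq_self g volume ξ]
    _ ≤ 2 ^ n * (I + 1) * (P n * Q (n + d / 2 + 1) + P (n + d / 2 + 1) * Q n) := by
        have hc1 : 0 ≤ P n * Q (n + d / 2 + 1) := mul_nonneg (hP0 _) (hQ0 _)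
        have hc2 : 0 ≤ P (n + d / 2 + 1) * Q n := mul_nonneg (hP0 _) (hQ0 _)
        have h2n : (0:ℝ) ≤ 2 ^ n := by positivity
        nlinarith [mul_nonneg h2n (add_nonneg hc1 hc2)]
end

section
/- Let d ≥ 2, 0 < α < d, and let p satisfy d/(d−α) < p < d/α, with conjugate exponent p'. Then there exists a constant C > 0, depending only on d, α and p, such that for every k ≥ 2, every f₁, …, f_k ∈ L¹(ℝ^d) ∩ L^p(ℝ^d) ∩ L^{p'}(ℝ^d), every way w of fully parenthesizing a product of k factors (i.e., every element w of the free magma on k generators), and every ξ ∈ ℝ^d with |ξ| ≥ 1, the iterated Riesz convolution satisfies |w^{∗_α}(f₁, …, f_k)(ξ)| ≤ C^{k−2}·∏_{j=1}^k ‖f_j‖_{1⊕p⊕p'}. -/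
open MeasureTheory ENNReal

/-- Evaluation of an element of a free magma in a magma `(β, op)` at the assignment `f`. -/
def magmaEval {α β : Type*} (op : β → β → β) (f : α → β) : FreeMagma α → β
  | .of a => f a
  | .mul x y => op (magmaEval op f x) (magmaEval op f y)

/-- The list of leaves (with multiplicity, left to right) of an element of a free magma. -/
def magmaLeaves {α : Type*} : FreeMagma α → List α
  | .of a => [a]
  | .mul x y => magmaLeaves x ++ magmaLeaves y

/-- The Riesz convolution `(f ∗_α g)(ξ) = (f ∗ g)(ξ) / |ξ|^α`. -/
noncomputable def rieszConv (d : ℕ) (α : ℝ)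
    (f g : EuclideanSpace ℝ (Fin d) → ℂ) : EuclideanSpace ℝ (Fin d) → ℂ :=
  fun ξ => (∫ η, f (ξ - η) * g η) / ((‖ξ‖ ^ α : ℝ) : ℂ)

/-- The norm `‖φ‖_{1⊕p⊕p'} = ‖φ‖_{L¹} + ‖φ‖_{L^p} + ‖φ‖_{L^{p'}}`. -/
noncomputable def triNorm (d : ℕ) (p p' : ℝ≥0∞)
    (f : EuclideanSpace ℝ (Fin d) → ℂ) : ℝ≥0∞ :=
  eLpNorm f 1 volume + eLpNorm f p volume + eLpNorm f p' volume

namespace RieszAux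

open Metric Set

noncomputable section

/-- The lintegral of the pointwise product of norms, dominating the convolution. -/
def Jfun (d : ℕ) (f g : EuclideanSpace ℝ (Fin d) → ℂ) (ξ : EuclideanSpace ℝ (Fin d)) : ℝ≥0∞ :=
  ∫⁻ η, ‖f (ξ - η) * g η‖₊ ∂volume

variable {d : ℕ}

lemma setLIntegral_mono_fun {X : Type*} [MeasurableSpace X] {μ : Measure X} {s : Set X}
    (hs : MeasurableSet s) {f g : X → ℝ≥0∞} (h : ∀ x ∈ s, f x ≤ g x) :
    ∫⁻ x in s, f x ∂μ ≤ ∫⁻ x in s, g x ∂μ := by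
  rw [← lintegral_indicator hs, ← lintegral_indicator hs]
  refine lintegral_mono fun x => ?_
  by_cases hx : x ∈ s
  · simpa [hx] using h x hx
  · simp [hx]

/-- Finiteness of `∫_{B(0,1)} ‖x‖^{-β}` for `0 < β < d`. -/
lemma K_lt_top (hd : 0 < d) {β : ℝ} (hβ0 : 0 < β) (hβd : β < d) :
    ∫⁻ x in ball (0 : EuclideanSpace ℝ (Fin d)) 1, ENNReal.ofReal (‖x‖ ^ (-β)) ∂volume < ⊤ := by
  classical
  haveI : Nontrivial (EuclideanSpace ℝ (Fin d)) := by
    refine ⟨⟨0, EuclideanSpace.single (⟨0, hd⟩ : Fin d) 1, fun h => ?_⟩⟩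
    have h0 := congrArg (fun v : EuclideanSpace ℝ (Fin d) => v (⟨0, hd⟩ : Fin d)) h
    simp [EuclideanSpace.single_apply] at h0
  set c := volume (ball (0 : EuclideanSpace ℝ (Fin d)) 1) with hc
  have hcfin : c ≠ ⊤ := (measure_ball_lt_top).ne
  set A : ℕ → Set (EuclideanSpace ℝ (Fin d)) :=
    fun n => {x : EuclideanSpace ℝ (Fin d) | (2⁻¹ : ℝ) ^ (n + 1) < ‖x‖ ∧ ‖x‖ ≤ (2⁻¹ : ℝ) ^ n}
    with hA
  have hsub : ball (0 : EuclideanSpace ℝ (Fin d)) 1 ⊆ {0} ∪ ⋃ n, A n := by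
    intro x hx
    rcases eq_or_ne x 0 with rfl | hx0
    · exact Or.inl rfl
    right
    have hxn : 0 < ‖x‖ := norm_pos_iff.mpr hx0
    have hx1 : ‖x‖ < 1 := by simpa using mem_ball_zero_iff.mp hx
    have hex : ∃ n : ℕ, (2⁻¹ : ℝ) ^ n < ‖x‖ := exists_pow_lt_of_lt_one hxn (by norm_num)
    have hm0 : Nat.find hex ≠ 0 := by
      intro h
      have h2 := Nat.find_spec hex
      rw [h] at h2
      simp only [pow_zero] at h2
      linarith
    obtain ⟨n, hn⟩ := Nat.exists_eq_succ_of_ne_zero hm0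
    refine mem_iUnion.mpr ⟨n, ?_, ?_⟩
    · have h2 := Nat.find_spec hex
      rwa [hn] at h2
    · exact le_of_not_gt (Nat.find_min hex (m := n) (by omega))
  have h2β : (0:ℝ) ≤ (2:ℝ) ^ β := (Real.rpow_pos_of_pos two_pos β).le
  have key : ∀ n : ℕ, ∫⁻ x in A n, ENNReal.ofReal (‖x‖ ^ (-β)) ∂volume ≤
      (ENNReal.ofReal ((2:ℝ) ^ β) * ENNReal.ofReal ((2⁻¹:ℝ) ^ d)) ^ n *
        (ENNReal.ofReal ((2:ℝ) ^ β) * c) := by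
    intro n
    have hAm : MeasurableSet (A n) := by
      refine MeasurableSet.inter ?_ ?_
      · exact measurableSet_lt measurable_const measurable_norm
      · exact measurableSet_le measurable_norm measurable_const
    have hpow : ((2⁻¹ : ℝ) ^ (n+1)) ^ (-β) = ((2:ℝ) ^ β) ^ (n + 1) := by
      have e1 : ((2⁻¹ : ℝ) ^ (n+1)) = (2:ℝ) ^ (-((n+1 : ℕ) : ℝ)) := by
        rw [Real.rpow_neg (by norm_num), Real.rpow_natCast, inv_pow]
      rw [e1, ← Real.rpow_mul (by norm_num : (0:ℝ) ≤ 2),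
        ← Real.rpow_natCast ((2:ℝ) ^ β) (n+1), ← Real.rpow_mul (by norm_num : (0:ℝ) ≤ 2)]
      congr 1
      ring
    have hstep1 : ∫⁻ x in A n, ENNReal.ofReal (‖x‖ ^ (-β)) ∂volume ≤
        ENNReal.ofReal (((2:ℝ) ^ β) ^ (n+1)) * volume (A n) := by
      rw [← setLIntegral_const]
      refine setLIntegral_mono_fun hAm fun x hx => ?_
      refine ENNReal.ofReal_le_ofReal ?_
      rw [← hpow]
      exact Real.rpow_le_rpow_of_nonpos (pow_pos (by norm_num) _) hx.1.le
        (neg_nonpos.mpr hβ0.le)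
    have hvol : volume (A n) ≤ ENNReal.ofReal ((2⁻¹:ℝ) ^ (n * d)) * c := by
      have hsub2 : A n ⊆ closedBall (0 : EuclideanSpace ℝ (Fin d)) ((2⁻¹:ℝ) ^ n) := by
        intro x hx
        simpa [mem_closedBall, dist_zero_right] using hx.2
      calc volume (A n) ≤ volume (closedBall (0 : EuclideanSpace ℝ (Fin d)) ((2⁻¹:ℝ) ^ n)) :=
            measure_mono hsub2
        _ = ENNReal.ofReal (((2⁻¹:ℝ) ^ n) ^ Module.finrank ℝ (EuclideanSpace ℝ (Fin d))) *
              volume (ball (0 : EuclideanSpace ℝ (Fin d)) 1) :=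
            Measure.addHaar_closedBall _ _ (by positivity)
        _ = ENNReal.ofReal ((2⁻¹:ℝ) ^ (n * d)) * c := by
            rw [← pow_mul, finrank_euclideanSpace_fin]
    calc ∫⁻ x in A n, ENNReal.ofReal (‖x‖ ^ (-β)) ∂volume
        ≤ ENNReal.ofReal (((2:ℝ) ^ β) ^ (n+1)) * (ENNReal.ofReal ((2⁻¹:ℝ) ^ (n * d)) * c) :=
          hstep1.trans (mul_le_mul_right hvol _)
      _ = (ENNReal.ofReal ((2:ℝ) ^ β) * ENNReal.ofReal ((2⁻¹:ℝ) ^ d)) ^ n *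
            (ENNReal.ofReal ((2:ℝ) ^ β) * c) := by
          have hhalf : (0:ℝ) ≤ (2⁻¹:ℝ) := by positivity
          rw [ENNReal.ofReal_pow h2β, ENNReal.ofReal_pow hhalf (n * d),
            ENNReal.ofReal_pow hhalf d, mul_pow, mul_comm n d, pow_mul, pow_succ]
          ring
  set u := ENNReal.ofReal ((2:ℝ) ^ β) with hu
  set v := ENNReal.ofReal ((2⁻¹:ℝ) ^ d) with hv
  have huv : u * v < 1 := by
    rw [hu, hv, ← ENNReal.ofReal_mul h2β, ← ENNReal.ofReal_one]
    refine (ENNReal.ofReal_lt_ofReal_iff (by norm_num)).mpr ?_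
    have h2d : ((2:ℝ) ^ β) < (2:ℝ) ^ (d:ℝ) :=
      (Real.rpow_lt_rpow_left_iff (by norm_num)).mpr hβd
    rw [Real.rpow_natCast] at h2d
    have hpos : (0:ℝ) < (2:ℝ) ^ d := by positivity
    rw [inv_pow, ← div_eq_mul_inv, div_lt_one hpos]
    exact h2d
  have hfin : (∑' n : ℕ, (u * v) ^ n * (u * c)) < ⊤ := by
    rw [ENNReal.tsum_mul_right, ENNReal.tsum_geometric]
    refine ENNReal.mul_lt_top ?_ ?_
    · rw [ENNReal.inv_lt_top]
      rw [pos_iff_ne_zero, Ne, tsub_eq_zero_iff_le]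
      exact not_le.mpr huv
    · exact ENNReal.mul_lt_top ENNReal.ofReal_lt_top hcfin.lt_top
  calc ∫⁻ x in ball (0 : EuclideanSpace ℝ (Fin d)) 1, ENNReal.ofReal (‖x‖ ^ (-β)) ∂volume
      ≤ ∫⁻ x in ({0} ∪ ⋃ n, A n : Set (EuclideanSpace ℝ (Fin d))),
          ENNReal.ofReal (‖x‖ ^ (-β)) ∂volume := lintegral_mono_set hsub
    _ ≤ (∫⁻ x in ({0} : Set (EuclideanSpace ℝ (Fin d))), ENNReal.ofReal (‖x‖ ^ (-β)) ∂volume) +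
          ∫⁻ x in (⋃ n, A n), ENNReal.ofReal (‖x‖ ^ (-β)) ∂volume := by
        refine (lintegral_mono' (Measure.restrict_union_le _ _) le_rfl).trans_eq ?_
        exact lintegral_add_measure _ _ _
    _ = ∫⁻ x in (⋃ n, A n), ENNReal.ofReal (‖x‖ ^ (-β)) ∂volume := by
        rw [setLIntegral_measure_zero _ _ (measure_singleton 0), zero_add]
    _ ≤ ∑' n, ∫⁻ x in A n, ENNReal.ofReal (‖x‖ ^ (-β)) ∂volume := lintegral_iUnion_le _ _
    _ ≤ ∑' n : ℕ, (u * v) ^ n * (u * c) := ENNReal.tsum_le_tsum key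
    _ < ⊤ := hfin

lemma conv_integrand_aesm {f g : EuclideanSpace ℝ (Fin d) → ℂ}
    (hf : AEStronglyMeasurable f volume) (hg : AEStronglyMeasurable g volume) :
    AEStronglyMeasurable (fun z : EuclideanSpace ℝ (Fin d) × EuclideanSpace ℝ (Fin d) =>
      f (z.1 - z.2) * g z.2) (volume.prod volume) := by
  have h := hg.convolution_integrand ((ContinuousLinearMap.mul ℝ ℂ).flip) hf
  simpa [ContinuousLinearMap.flip_apply, ContinuousLinearMap.mul_apply', mul_comm] using h

lemma conv_aesm {f g : EuclideanSpace ℝ (Fin d) → ℂ}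
    (hf : AEStronglyMeasurable f volume) (hg : AEStronglyMeasurable g volume) :
    AEStronglyMeasurable (fun ξ => ∫ η, f (ξ - η) * g η) volume :=
  (conv_integrand_aesm hf hg).integral_prod_right'

lemma riesz_aesm {α : ℝ} (hα0 : 0 < α) {f g : EuclideanSpace ℝ (Fin d) → ℂ}
    (hf : AEStronglyMeasurable f volume) (hg : AEStronglyMeasurable g volume) :
    AEStronglyMeasurable (rieszConv d α f g) volume := by
  rw [aestronglyMeasurable_iff_aemeasurable]
  have h1 : AEMeasurable (fun ξ => ∫ η, f (ξ - η) * g η) volume := (conv_aesm hf hg).aemeasurable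
  have h2 : Measurable (fun ξ : EuclideanSpace ℝ (Fin d) => ((‖ξ‖ ^ α : ℝ) : ℂ)) :=
    (Complex.continuous_ofReal.comp
      (continuous_norm.rpow_const fun _ => Or.inr hα0.le)).measurable
  exact h1.div h2.aemeasurable

lemma nnnorm_riesz_le {α : ℝ} (hα0 : 0 < α) (f g : EuclideanSpace ℝ (Fin d) → ℂ)
    (ξ : EuclideanSpace ℝ (Fin d)) :
    (‖rieszConv d α f g ξ‖₊ : ℝ≥0∞) ≤ Jfun d f g ξ * ENNReal.ofReal (‖ξ‖ ^ (-α)) := by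
  rcases eq_or_ne ξ 0 with rfl | hξ
  · have h0 : rieszConv d α f g 0 = 0 := by
      simp [rieszConv, Real.zero_rpow hα0.ne']
    simp [h0]
  · have hn : 0 < ‖ξ‖ := norm_pos_iff.mpr hξ
    have hre : ‖rieszConv d α f g ξ‖ = ‖∫ η, f (ξ - η) * g η‖ * ‖ξ‖ ^ (-α) := by
      simp only [rieszConv]
      rw [norm_div, Complex.norm_real, Real.norm_eq_abs,
        abs_of_nonneg (Real.rpow_nonneg (norm_nonneg ξ) α),
        Real.rpow_neg (norm_nonneg ξ), div_eq_mul_inv]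
    rw [← enorm_eq_nnnorm, ← ofReal_norm, hre,
      ENNReal.ofReal_mul (norm_nonneg _)]
    refine mul_le_mul' ?_ le_rfl
    rw [ofReal_norm]
    exact enorm_integral_le_lintegral_enorm _

lemma Jfun_le_mul {f g : EuclideanSpace ℝ (Fin d) → ℂ}
    (hf : AEStronglyMeasurable f volume) (hg : AEStronglyMeasurable g volume)
    {p p' : ℝ≥0∞} (hp0 : p ≠ 0) (hpt : p ≠ ⊤) (hp'0 : p' ≠ 0) (hp't : p' ≠ ⊤)
    (hc : p.toReal.HolderConjugate p'.toReal) (ξ : EuclideanSpace ℝ (Fin d)) :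
    Jfun d f g ξ ≤ eLpNorm f p volume * eLpNorm g p' volume := by
  have hmf : AEMeasurable (fun η => (‖f (ξ - η)‖₊ : ℝ≥0∞)) volume :=
    (hf.comp_measurePreserving (Measure.measurePreserving_sub_left volume ξ)).enorm
  have hmg : AEMeasurable (fun η => (‖g η‖₊ : ℝ≥0∞)) volume := hg.enorm
  have H := ENNReal.lintegral_mul_le_Lp_mul_Lq volume hc hmf hmg
  have hemb : MeasurableEmbedding (fun η : EuclideanSpace ℝ (Fin d) => ξ - η) :=
    (MeasurableEquiv.subLeft ξ).measurableEmbedding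
  have hswap : ∫⁻ η, (‖f (ξ - η)‖₊ : ℝ≥0∞) ^ p.toReal ∂volume
      = ∫⁻ x, (‖f x‖₊ : ℝ≥0∞) ^ p.toReal ∂volume :=
    (Measure.measurePreserving_sub_left volume ξ).lintegral_comp_emb hemb
      (fun x => (‖f x‖₊ : ℝ≥0∞) ^ p.toReal)
  calc Jfun d f g ξ
      = ∫⁻ η, ((fun η => (‖f (ξ - η)‖₊ : ℝ≥0∞)) * fun η => (‖g η‖₊ : ℝ≥0∞)) η ∂volume := by
        simp [Jfun, nnnorm_mul, ENNReal.coe_mul]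
    _ ≤ (∫⁻ η, (‖f (ξ - η)‖₊ : ℝ≥0∞) ^ p.toReal ∂volume) ^ (1 / p.toReal) *
          (∫⁻ η, (‖g η‖₊ : ℝ≥0∞) ^ p'.toReal ∂volume) ^ (1 / p'.toReal) := H
    _ = eLpNorm f p volume * eLpNorm g p' volume := by
        simp only [hswap, eLpNorm_eq_lintegral_rpow_enorm_toReal hp0 hpt,
          eLpNorm_eq_lintegral_rpow_enorm_toReal hp'0 hp't, enorm_eq_nnnorm]

lemma lintegral_Jfun_le {f g : EuclideanSpace ℝ (Fin d) → ℂ}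
    (hf : AEStronglyMeasurable f volume) (hg : AEStronglyMeasurable g volume) :
    ∫⁻ ξ, Jfun d f g ξ ∂volume ≤ eLpNorm f 1 volume * eLpNorm g 1 volume := by
  have hm : AEMeasurable
      (Function.uncurry fun ξ η : EuclideanSpace ℝ (Fin d) => (‖f (ξ - η) * g η‖₊ : ℝ≥0∞))
      (volume.prod volume) := by
    have h := (conv_integrand_aesm hf hg).enorm
    exact h
  have hswap := lintegral_lintegral_swap hm
  refine le_of_eq ?_
  calc ∫⁻ ξ, Jfun d f g ξ ∂volume
      = ∫⁻ η, ∫⁻ ξ, (‖f (ξ - η) * g η‖₊ : ℝ≥0∞) ∂volume ∂volume := hswap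
    _ = ∫⁻ η, (∫⁻ ξ, (‖f (ξ - η)‖₊ : ℝ≥0∞) ∂volume) * (‖g η‖₊ : ℝ≥0∞) ∂volume := by
        refine lintegral_congr fun η => ?_
        simp_rw [nnnorm_mul, ENNReal.coe_mul]
        exact lintegral_mul_const'' _
          ((hf.comp_measurePreserving (measurePreserving_sub_right volume η)).enorm)
    _ = ∫⁻ η, (∫⁻ x, (‖f x‖₊ : ℝ≥0∞) ∂volume) * (‖g η‖₊ : ℝ≥0∞) ∂volume := by
        refine lintegral_congr fun η => ?_
        rw [lintegral_sub_right_eq_self (fun x => (‖f x‖₊ : ℝ≥0∞)) η]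
    _ = (∫⁻ x, (‖f x‖₊ : ℝ≥0∞) ∂volume) * ∫⁻ η, (‖g η‖₊ : ℝ≥0∞) ∂volume :=
        lintegral_const_mul'' _ hg.enorm
    _ = eLpNorm f 1 volume * eLpNorm g 1 volume := by
        simp only [eLpNorm_one_eq_lintegral_enorm, enorm_eq_nnnorm]

/-- The constant attached to a single exponent. -/
def Kterm (d : ℕ) (α : ℝ) (e : ℝ≥0∞) : ℝ≥0∞ :=
  (∫⁻ x in ball (0 : EuclideanSpace ℝ (Fin d)) 1,
      ENNReal.ofReal (‖x‖ ^ (-(α * e.toReal))) ∂volume) ^ (1 / e.toReal) + 1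

lemma Kterm_lt_top (hd : 0 < d) {α : ℝ} (hα0 : 0 < α) {e : ℝ≥0∞} (he1 : 1 ≤ e) (het : e ≠ ⊤)
    (hαe : α * e.toReal < d) : Kterm d α e < ⊤ := by
  have hr1 : 1 ≤ e.toReal := by
    rw [← ENNReal.toReal_one]
    exact ENNReal.toReal_mono het he1
  have hK := K_lt_top hd (mul_pos hα0 (by linarith)) hαe
  rw [Kterm]
  exact ENNReal.add_lt_top.mpr
    ⟨ENNReal.rpow_lt_top_of_nonneg (by positivity) hK.ne, ENNReal.one_lt_top⟩

lemma eLpNorm_riesz_le {α : ℝ} (hα0 : 0 < α) {f g : EuclideanSpace ℝ (Fin d) → ℂ} {e : ℝ≥0∞}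
    (he1 : 1 ≤ e) (het : e ≠ ⊤) {M : ℝ≥0∞}
    (hB : ∀ ξ, Jfun d f g ξ ≤ M) (hI : ∫⁻ ξ, Jfun d f g ξ ∂volume ≤ M) :
    eLpNorm (rieszConv d α f g) e volume ≤ Kterm d α e * M := by
  set r := e.toReal with hrdef
  have he0 : e ≠ 0 := by
    intro h
    rw [h] at he1
    simp at he1
  have hr1 : 1 ≤ r := by
    rw [hrdef, ← ENNReal.toReal_one]
    exact ENNReal.toReal_mono het he1
  have hr0 : 0 < r := lt_of_lt_of_le one_pos hr1
  set K := ∫⁻ x in ball (0 : EuclideanSpace ℝ (Fin d)) 1,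
    ENNReal.ofReal (‖x‖ ^ (-(α * r))) ∂volume with hKdef
  have hKterm : Kterm d α e = K ^ (1 / r) + 1 := rfl
  rcases eq_top_or_lt_top M with rfl | hMt
  · have hne : K ^ (1 / r) + 1 ≠ 0 := by simp
    rw [hKterm, ENNReal.mul_top hne]
    exact le_top
  have hMne : M ≠ ⊤ := hMt.ne
  have hpt : ∀ ξ, (‖rieszConv d α f g ξ‖₊ : ℝ≥0∞) ≤ Jfun d f g ξ * ENNReal.ofReal (‖ξ‖ ^ (-α)) :=
    nnnorm_riesz_le hα0 f g
  rw [eLpNorm_eq_lintegral_rpow_enorm_toReal he0 het]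
  simp only [enorm_eq_nnnorm]
  rw [← lintegral_add_compl (fun ξ => (‖rieszConv d α f g ξ‖₊ : ℝ≥0∞) ^ r)
    (measurableSet_ball (x := (0 : EuclideanSpace ℝ (Fin d))) (ε := 1))]
  have hball : ∫⁻ ξ in ball (0 : EuclideanSpace ℝ (Fin d)) 1,
      (‖rieszConv d α f g ξ‖₊ : ℝ≥0∞) ^ r ∂volume ≤ M ^ r * K := by
    calc ∫⁻ ξ in ball (0 : EuclideanSpace ℝ (Fin d)) 1,
        (‖rieszConv d α f g ξ‖₊ : ℝ≥0∞) ^ r ∂volume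
        ≤ ∫⁻ ξ in ball (0 : EuclideanSpace ℝ (Fin d)) 1,
            M ^ r * ENNReal.ofReal (‖ξ‖ ^ (-(α * r))) ∂volume := by
          refine setLIntegral_mono_fun measurableSet_ball fun ξ _ => ?_
          have h1 : (‖rieszConv d α f g ξ‖₊ : ℝ≥0∞) ≤ M * ENNReal.ofReal (‖ξ‖ ^ (-α)) :=
            (hpt ξ).trans (mul_le_mul_left (hB ξ) _)
          calc (‖rieszConv d α f g ξ‖₊ : ℝ≥0∞) ^ r
              ≤ (M * ENNReal.ofReal (‖ξ‖ ^ (-α))) ^ r := ENNReal.rpow_le_rpow h1 hr0.le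
            _ = M ^ r * ENNReal.ofReal (‖ξ‖ ^ (-(α * r))) := by
                rw [ENNReal.mul_rpow_of_nonneg _ _ hr0.le,
                  ENNReal.ofReal_rpow_of_nonneg (Real.rpow_nonneg (norm_nonneg _) _) hr0.le,
                  ← Real.rpow_mul (norm_nonneg _), neg_mul]
      _ = M ^ r * K := by
          rw [hKdef, ← lintegral_const_mul' _ _ (ENNReal.rpow_ne_top_of_nonneg hr0.le hMne)]
  have hcompl : ∫⁻ ξ in (ball (0 : EuclideanSpace ℝ (Fin d)) 1)ᶜ,
      (‖rieszConv d α f g ξ‖₊ : ℝ≥0∞) ^ r ∂volume ≤ M ^ r := by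
    calc ∫⁻ ξ in (ball (0 : EuclideanSpace ℝ (Fin d)) 1)ᶜ,
        (‖rieszConv d α f g ξ‖₊ : ℝ≥0∞) ^ r ∂volume
        ≤ ∫⁻ ξ in (ball (0 : EuclideanSpace ℝ (Fin d)) 1)ᶜ,
            M ^ (r - 1) * Jfun d f g ξ ∂volume := by
          refine setLIntegral_mono_fun measurableSet_ball.compl fun ξ hξ => ?_
          have hξ1 : 1 ≤ ‖ξ‖ := by
            have := hξ
            simp only [mem_compl_iff, mem_ball, dist_zero_right, not_lt] at this
            exact this
          have hle1 : ENNReal.ofReal (‖ξ‖ ^ (-α)) ≤ 1 := by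
            rw [← ENNReal.ofReal_one]
            exact ENNReal.ofReal_le_ofReal
              (Real.rpow_le_one_of_one_le_of_nonpos hξ1 (neg_nonpos.mpr hα0.le))
          have hx : (‖rieszConv d α f g ξ‖₊ : ℝ≥0∞) ≤ Jfun d f g ξ := by
            calc (‖rieszConv d α f g ξ‖₊ : ℝ≥0∞)
                ≤ Jfun d f g ξ * ENNReal.ofReal (‖ξ‖ ^ (-α)) := hpt ξ
              _ ≤ Jfun d f g ξ * 1 := mul_le_mul_right hle1 _
              _ = Jfun d f g ξ := mul_one _
          rcases eq_or_ne (‖rieszConv d α f g ξ‖₊ : ℝ≥0∞) 0 with h0 | h0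
          · rw [h0, ENNReal.zero_rpow_of_pos hr0]
            exact zero_le
          · have hsplit : (‖rieszConv d α f g ξ‖₊ : ℝ≥0∞) ^ r
                = (‖rieszConv d α f g ξ‖₊ : ℝ≥0∞) ^ (r - 1) *
                  (‖rieszConv d α f g ξ‖₊ : ℝ≥0∞) := by
              conv_lhs => rw [show r = (r - 1) + 1 by ring]
              rw [ENNReal.rpow_add _ _ h0 ENNReal.coe_ne_top, ENNReal.rpow_one]
            rw [hsplit]
            exact mul_le_mul' (ENNReal.rpow_le_rpow (hx.trans (hB ξ)) (by linarith)) hx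
      _ ≤ M ^ (r - 1) * ∫⁻ ξ, Jfun d f g ξ ∂volume := by
          rw [lintegral_const_mul' _ _ (ENNReal.rpow_ne_top_of_nonneg (by linarith) hMne)]
          exact mul_le_mul_right (setLIntegral_le_lintegral _ _) _
      _ ≤ M ^ (r - 1) * M := mul_le_mul_right hI _
      _ = M ^ r := by
          rcases eq_or_ne M 0 with rfl | hM0
          · simp [ENNReal.zero_rpow_of_pos hr0]
          · have h1 : M ^ (r - 1) * M ^ (1 : ℝ) = M ^ r := by
              rw [← ENNReal.rpow_add _ _ hM0 hMne]
              norm_num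
            simpa [ENNReal.rpow_one] using h1
  calc (∫⁻ ξ in ball (0 : EuclideanSpace ℝ (Fin d)) 1,
        (‖rieszConv d α f g ξ‖₊ : ℝ≥0∞) ^ r ∂volume +
      ∫⁻ ξ in (ball (0 : EuclideanSpace ℝ (Fin d)) 1)ᶜ,
        (‖rieszConv d α f g ξ‖₊ : ℝ≥0∞) ^ r ∂volume) ^ (1 / r)
      ≤ (M ^ r * K + M ^ r) ^ (1 / r) :=
        ENNReal.rpow_le_rpow (add_le_add hball hcompl) (by positivity)
    _ ≤ (M ^ r * K) ^ (1 / r) + (M ^ r) ^ (1 / r) :=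
        ENNReal.rpow_add_le_add_rpow _ _ (by positivity) (by
          rw [div_le_one hr0]; exact hr1)
    _ = Kterm d α e * M := by
        rw [hKterm, ENNReal.mul_rpow_of_nonneg _ _ (by positivity), ← ENNReal.rpow_mul,
          mul_one_div_cancel hr0.ne', ENNReal.rpow_one]
        ring

lemma triNorm_riesz_le {α : ℝ} (hα0 : 0 < α) {p p' : ℝ≥0∞}
    (hp1 : 1 < p) (hpt : p ≠ ⊤) (hp'1 : 1 < p') (hp't : p' ≠ ⊤)
    (hconj : p.toReal.HolderConjugate p'.toReal)
    {f g : EuclideanSpace ℝ (Fin d) → ℂ}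
    (hf : AEStronglyMeasurable f volume) (hg : AEStronglyMeasurable g volume) :
    triNorm d p p' (rieszConv d α f g) ≤
      (Kterm d α 1 + Kterm d α p + Kterm d α p') *
        (triNorm d p p' f * triNorm d p p' g) := by
  set M := triNorm d p p' f * triNorm d p p' g with hM
  have hp0 : p ≠ 0 := by
    intro h
    rw [h] at hp1
    exact absurd hp1 (by simp)
  have hp'0 : p' ≠ 0 := by
    intro h
    rw [h] at hp'1
    exact absurd hp'1 (by simp)
  have hfp : eLpNorm f p volume ≤ triNorm d p p' f := by
    rw [triNorm]
    calc eLpNorm f p volume ≤ eLpNorm f 1 volume + eLpNorm f p volume := self_le_add_left _ _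
      _ ≤ _ := self_le_add_right _ _
  have hf1 : eLpNorm f 1 volume ≤ triNorm d p p' f := by
    rw [triNorm]
    calc eLpNorm f 1 volume ≤ eLpNorm f 1 volume + eLpNorm f p volume := self_le_add_right _ _
      _ ≤ _ := self_le_add_right _ _
  have hgp' : eLpNorm g p' volume ≤ triNorm d p p' g := self_le_add_left _ _
  have hg1 : eLpNorm g 1 volume ≤ triNorm d p p' g := by
    rw [triNorm]
    calc eLpNorm g 1 volume ≤ eLpNorm g 1 volume + eLpNorm g p volume := self_le_add_right _ _
      _ ≤ _ := self_le_add_right _ _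
  have hB : ∀ ξ, Jfun d f g ξ ≤ M := fun ξ =>
    (Jfun_le_mul hf hg hp0 hpt hp'0 hp't hconj ξ).trans (mul_le_mul' hfp hgp')
  have hI : ∫⁻ ξ, Jfun d f g ξ ∂volume ≤ M :=
    (lintegral_Jfun_le hf hg).trans (mul_le_mul' hf1 hg1)
  have h1 := eLpNorm_riesz_le hα0 (le_refl (1 : ℝ≥0∞)) ENNReal.one_ne_top hB hI
  have hp := eLpNorm_riesz_le hα0 hp1.le hpt hB hI
  have hp' := eLpNorm_riesz_le hα0 hp'1.le hp't hB hI
  calc triNorm d p p' (rieszConv d α f g)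
      = eLpNorm (rieszConv d α f g) 1 volume + eLpNorm (rieszConv d α f g) p volume +
          eLpNorm (rieszConv d α f g) p' volume := rfl
    _ ≤ Kterm d α 1 * M + Kterm d α p * M + Kterm d α p' * M :=
        add_le_add (add_le_add h1 hp) hp'
    _ = (Kterm d α 1 + Kterm d α p + Kterm d α p') * M := by ring

lemma magmaLeaves_length_pos {ι : Type*} : ∀ w : FreeMagma ι, 0 < (magmaLeaves w).length
  | .of _ => by simp [magmaLeaves]
  | .mul x y => by
    have hx := magmaLeaves_length_pos x
    have hy := magmaLeaves_length_pos y
    simp only [magmaLeaves, List.length_append]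
    omega

lemma magma_bound {ι : Type*} {α : ℝ} {p p' : ℝ≥0∞} (f : ι → EuclideanSpace ℝ (Fin d) → ℂ)
    (hf : ∀ a, AEStronglyMeasurable (f a) volume) {Cc : ℝ≥0∞}
    (hmeas : ∀ u v : EuclideanSpace ℝ (Fin d) → ℂ, AEStronglyMeasurable u volume →
      AEStronglyMeasurable v volume → AEStronglyMeasurable (rieszConv d α u v) volume)
    (halg : ∀ u v : EuclideanSpace ℝ (Fin d) → ℂ, AEStronglyMeasurable u volume →
      AEStronglyMeasurable v volume →
      triNorm d p p' (rieszConv d α u v) ≤ Cc * (triNorm d p p' u * triNorm d p p' v)) :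
    ∀ w : FreeMagma ι, AEStronglyMeasurable (magmaEval (rieszConv d α) f w) volume ∧
      triNorm d p p' (magmaEval (rieszConv d α) f w) ≤
        Cc ^ ((magmaLeaves w).length - 1) *
          ((magmaLeaves w).map fun a => triNorm d p p' (f a)).prod
  | .of a => by
    refine ⟨hf a, ?_⟩
    simp [magmaEval, magmaLeaves]
  | .mul x y => by
    obtain ⟨hmx, hbx⟩ := magma_bound f hf hmeas halg x
    obtain ⟨hmy, hby⟩ := magma_bound f hf hmeas halg y
    have heval : magmaEval (rieszConv d α) f (x.mul y)
        = rieszConv d α (magmaEval (rieszConv d α) f x) (magmaEval (rieszConv d α) f y) := rfl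
    have hlx := magmaLeaves_length_pos x
    have hly := magmaLeaves_length_pos y
    refine ⟨by rw [heval]; exact hmeas _ _ hmx hmy, ?_⟩
    rw [heval]
    calc triNorm d p p' (rieszConv d α _ _)
        ≤ Cc * (triNorm d p p' (magmaEval (rieszConv d α) f x) *
            triNorm d p p' (magmaEval (rieszConv d α) f y)) := halg _ _ hmx hmy
      _ ≤ Cc * ((Cc ^ ((magmaLeaves x).length - 1) *
            ((magmaLeaves x).map fun a => triNorm d p p' (f a)).prod) *
          (Cc ^ ((magmaLeaves y).length - 1) *
            ((magmaLeaves y).map fun a => triNorm d p p' (f a)).prod)) :=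
          mul_le_mul_right (mul_le_mul' hbx hby) _
      _ = Cc ^ ((magmaLeaves (x.mul y)).length - 1) *
            ((magmaLeaves (x.mul y)).map fun a => triNorm d p p' (f a)).prod := by
          rw [show magmaLeaves (x.mul y) = magmaLeaves x ++ magmaLeaves y from rfl,
            List.map_append, List.prod_append, List.length_append,
            show (magmaLeaves x).length + (magmaLeaves y).length - 1
              = 1 + (((magmaLeaves x).length - 1) + ((magmaLeaves y).length - 1)) by omega,
            pow_add, pow_add, pow_one]
          ring

end

end RieszAux

theorem riesz_conv_monomial_pointwise_bound (d : ℕ) (hd : 2 ≤ d) (α : ℝ)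
    (hα0 : 0 < α) (hαd : α < d) (p p' : ℝ≥0∞)
    (hp_lb : ENNReal.ofReal ((d : ℝ) / ((d : ℝ) - α)) < p)
    (hp_ub : p < ENNReal.ofReal ((d : ℝ) / α))
    (hpp' : p⁻¹ + p'⁻¹ = 1) :
    ∃ C : ℝ, 0 < C ∧
      ∀ k : ℕ, 2 ≤ k →
        ∀ f : Fin k → EuclideanSpace ℝ (Fin d) → ℂ,
          (∀ j, MemLp (f j) 1 volume ∧ MemLp (f j) p volume ∧ MemLp (f j) p' volume) →
          ∀ w : FreeMagma (Fin k), (magmaLeaves w).Perm (List.finRange k) →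
            ∀ ξ : EuclideanSpace ℝ (Fin d), 1 ≤ ‖ξ‖ →
              ENNReal.ofReal ‖magmaEval (rieszConv d α) f w ξ‖ ≤
                ENNReal.ofReal C ^ (k - 2) * ∏ j, triNorm d p p' (f j) := by
  classical
  -- real-number exponent bookkeeping
  have hd0 : (0:ℝ) < d := by
    have h : (0:ℕ) < d := by omega
    exact_mod_cast h
  have hda : 0 < (d:ℝ) - α := by linarith
  have hlb1 : 1 < (d:ℝ) / ((d:ℝ) - α) := by
    rw [lt_div_iff₀ hda]
    linarith
  have hp1 : 1 < p := lt_trans (ENNReal.one_lt_ofReal.mpr hlb1) hp_lb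
  have hpt : p ≠ ⊤ := ne_top_of_lt hp_ub
  have hp0 : p ≠ 0 := by
    intro h
    rw [h] at hp1
    exact absurd hp1 (by simp)
  have hq_lb : (d:ℝ) / ((d:ℝ) - α) < p.toReal :=
    (ENNReal.ofReal_lt_iff_lt_toReal (by positivity) hpt).mp hp_lb
  have hq_ub : p.toReal < (d:ℝ) / α := (ENNReal.lt_ofReal_iff_toReal_lt hpt).mp hp_ub
  have hq1 : 1 < p.toReal := lt_trans hlb1 hq_lb
  have hq0 : 0 < p.toReal := by linarith
  have hpinvt : p⁻¹ ≠ ⊤ := by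
    rw [Ne, ENNReal.inv_eq_top]
    exact hp0
  have hp'0 : p' ≠ 0 := by
    intro h
    rw [h] at hpp'
    simp at hpp'
  have hp'inv : p'⁻¹ = 1 - p⁻¹ := by
    rw [add_comm] at hpp'
    exact ENNReal.eq_sub_of_add_eq hpinvt hpp'
  have hpinv_pos : 0 < p⁻¹ := ENNReal.inv_pos.mpr hpt
  have hpinv_lt : p⁻¹ < 1 := ENNReal.inv_lt_one.mpr hp1
  have hp'inv_pos : 0 < p'⁻¹ := by
    rw [hp'inv]
    exact tsub_pos_of_lt hpinv_lt
  have hp't : p' ≠ ⊤ := by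
    intro h
    rw [h] at hp'inv_pos
    simp at hp'inv_pos
  have hp'1 : 1 < p' := by
    rw [← ENNReal.inv_lt_one, hp'inv]
    exact ENNReal.sub_lt_self ENNReal.one_ne_top one_ne_zero (ne_of_gt hpinv_pos)
  have hq'0 : 0 < p'.toReal := ENNReal.toReal_pos hp'0 hp't
  have hconj : p.toReal.HolderConjugate p'.toReal := by
    refine Real.holderConjugate_iff.mpr ⟨hq1, ?_⟩
    have h := congrArg ENNReal.toReal hpp'
    rw [ENNReal.toReal_add hpinvt (by rw [Ne, ENNReal.inv_eq_top]; exact hp'0),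
      ENNReal.toReal_inv, ENNReal.toReal_inv, ENNReal.toReal_one] at h
    exact h
  have hαq : α * p.toReal < d := by
    have h := (lt_div_iff₀ hα0).mp hq_ub
    nlinarith
  have hαq' : α * p'.toReal < d := by
    have h3 := (div_lt_iff₀ hda).mp hq_lb
    have h1 : (p.toReal)⁻¹ < ((d:ℝ) - α) / d := by
      rw [inv_eq_one_div, div_lt_div_iff₀ hq0 hd0]
      nlinarith
    have hsum := hconj.inv_add_inv_eq_one
    have h2 : α / d < (p'.toReal)⁻¹ := by
      have e : α / d = 1 - ((d:ℝ) - α)/d := by field_simp; ring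
      rw [e]
      linarith
    rw [inv_eq_one_div] at h2
    have h4 := (div_lt_div_iff₀ hd0 hq'0).mp h2
    nlinarith
  have hα1 : α * (1:ℝ≥0∞).toReal < d := by
    simpa using hαd
  -- the constant
  have hdpos : 0 < d := by omega
  have hK1 : RieszAux.Kterm d α 1 < ⊤ := RieszAux.Kterm_lt_top hdpos hα0 le_rfl ENNReal.one_ne_top hα1
  have hKp : RieszAux.Kterm d α p < ⊤ := RieszAux.Kterm_lt_top hdpos hα0 hp1.le hpt hαq
  have hKp' : RieszAux.Kterm d α p' < ⊤ := RieszAux.Kterm_lt_top hdpos hα0 hp'1.le hp't hαq'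
  set Cbig := RieszAux.Kterm d α 1 + RieszAux.Kterm d α p + RieszAux.Kterm d α p' with hCbig
  have hCfin : Cbig ≠ ⊤ := by
    rw [hCbig]
    exact (ENNReal.add_lt_top.mpr ⟨ENNReal.add_lt_top.mpr ⟨hK1, hKp⟩, hKp'⟩).ne
  have hC1 : (1:ℝ≥0∞) ≤ Cbig := by
    rw [hCbig]
    calc (1:ℝ≥0∞) ≤ RieszAux.Kterm d α 1 := le_add_self
      _ ≤ RieszAux.Kterm d α 1 + RieszAux.Kterm d α p := le_self_add
      _ ≤ _ := le_self_add
  have hCne : Cbig ≠ 0 := by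
    intro h
    rw [h] at hC1
    exact absurd hC1 (by simp)
  refine ⟨Cbig.toReal, ENNReal.toReal_pos hCne hCfin, ?_⟩
  have hofReal : ENNReal.ofReal Cbig.toReal = Cbig := ENNReal.ofReal_toReal hCfin
  intro k hk f hf w hw ξ hξ
  have hall : ∀ j, AEStronglyMeasurable (f j) volume := fun j => (hf j).1.aestronglyMeasurable
  have MB := RieszAux.magma_bound (d := d) (α := α) (p := p) (p' := p') (Cc := Cbig) f hall
    (fun u v hu hv => RieszAux.riesz_aesm hα0 hu hv)
    (fun u v hu hv => by
      rw [hCbig]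
      exact RieszAux.triNorm_riesz_le hα0 hp1 hpt hp'1 hp't hconj hu hv)
  cases w with
  | of a =>
    exfalso
    have hlen := hw.length_eq
    simp only [magmaLeaves, List.length_cons, List.length_nil, List.length_finRange] at hlen
    omega
  | mul x y =>
    obtain ⟨hmx, hbx⟩ := MB x
    obtain ⟨hmy, hby⟩ := MB y
    have hlx := RieszAux.magmaLeaves_length_pos x
    have hly := RieszAux.magmaLeaves_length_pos y
    have hlen : (magmaLeaves x).length + (magmaLeaves y).length = k := by
      have h := hw.length_eq
      simpa [magmaLeaves, List.length_append, List.length_finRange] using h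
    have hle1 : ENNReal.ofReal (‖ξ‖ ^ (-α)) ≤ 1 := by
      rw [← ENNReal.ofReal_one]
      exact ENNReal.ofReal_le_ofReal
        (Real.rpow_le_one_of_one_le_of_nonpos hξ (neg_nonpos.mpr hα0.le))
    have hXp : eLpNorm (magmaEval (rieszConv d α) f x) p volume ≤
        triNorm d p p' (magmaEval (rieszConv d α) f x) := by
      rw [triNorm]
      calc eLpNorm (magmaEval (rieszConv d α) f x) p volume
          ≤ eLpNorm (magmaEval (rieszConv d α) f x) 1 volume +
            eLpNorm (magmaEval (rieszConv d α) f x) p volume := self_le_add_left _ _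
        _ ≤ _ := self_le_add_right _ _
    have hYp' : eLpNorm (magmaEval (rieszConv d α) f y) p' volume ≤
        triNorm d p p' (magmaEval (rieszConv d α) f y) := self_le_add_left _ _
    calc ENNReal.ofReal ‖magmaEval (rieszConv d α) f (x.mul y) ξ‖
        = (‖rieszConv d α (magmaEval (rieszConv d α) f x) (magmaEval (rieszConv d α) f y) ξ‖₊ :
            ℝ≥0∞) := by rw [ofReal_norm]; rfl
      _ ≤ RieszAux.Jfun d (magmaEval (rieszConv d α) f x) (magmaEval (rieszConv d α) f y) ξ *
            ENNReal.ofReal (‖ξ‖ ^ (-α)) := RieszAux.nnnorm_riesz_le hα0 _ _ ξ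
      _ ≤ (eLpNorm (magmaEval (rieszConv d α) f x) p volume *
            eLpNorm (magmaEval (rieszConv d α) f y) p' volume) * 1 :=
          mul_le_mul' (RieszAux.Jfun_le_mul hmx hmy hp0 hpt hp'0 hp't hconj ξ) hle1
      _ ≤ triNorm d p p' (magmaEval (rieszConv d α) f x) *
            triNorm d p p' (magmaEval (rieszConv d α) f y) := by
          rw [mul_one]
          exact mul_le_mul' hXp hYp'
      _ ≤ (Cbig ^ ((magmaLeaves x).length - 1) *
            ((magmaLeaves x).map fun a => triNorm d p p' (f a)).prod) *
          (Cbig ^ ((magmaLeaves y).length - 1) *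
            ((magmaLeaves y).map fun a => triNorm d p p' (f a)).prod) := mul_le_mul' hbx hby
      _ = ENNReal.ofReal Cbig.toReal ^ (k - 2) * ∏ j, triNorm d p p' (f j) := by
          rw [hofReal]
          have hprod : ((magmaLeaves (x.mul y)).map fun a => triNorm d p p' (f a)).prod
              = ∏ j, triNorm d p p' (f j) := by
            rw [Fin.prod_univ_def]
            exact (hw.map fun a => triNorm d p p' (f a)).prod_eq
          rw [← hprod, show magmaLeaves (x.mul y) = magmaLeaves x ++ magmaLeaves y from rfl,
            List.map_append, List.prod_append,
            show k - 2 = ((magmaLeaves x).length - 1) + ((magmaLeaves y).length - 1) by omega,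
            pow_add]
          ring
end

section
/- Let d ≥ 1, α > 0, λ > 0, and n₁, n₂ ∈ ℕ, and set r_α := 1/max{2^(α−1), 1}. Let f : ℝ^d × [0,∞) → ℂ^{p×q} and g : ℝ^d × [0,∞) → ℂ^{r×q} be measurable in ξ for each t, and let f⁰, g⁰ : ℝ^d → [0,∞) be measurable functions in L¹(ℝ^d) ∩ L^∞(ℝ^d) such that |f(ξ,t)| ≤ t^{n₁} e^{−λt|ξ|^α} f⁰(ξ) and |g(ξ,t)| ≤ t^{n₂} e^{−λt|ξ|^α} g⁰(ξ) for all (ξ,t) ∈ ℝ^d × [0,∞), where |·| on matrices is the operator norm. Then the tensor convolution (f ∗ g)(ξ,t) := ∫_{ℝ^d} f(ξ−η,t)·g(η,t)^* dη satisfies |(f ∗ g)(ξ,t)| ≤ t^{n₁+n₂} e^{−r_α λ t |ξ|^α} (f⁰ ∗ g⁰)(ξ) for all (ξ,t) ∈ ℝ^d × [0,∞). -/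
open MeasureTheory
open scoped ENNReal NNReal

lemma aux_rpow_triangle (α : ℝ) (hα : 0 < α) {a b c : ℝ}
    (ha : 0 ≤ a) (hb : 0 ≤ b) (hc : 0 ≤ c) (h : c ≤ a + b) :
    (1 / max ((2 : ℝ) ^ (α - 1)) 1) * c ^ α ≤ a ^ α + b ^ α := by
  have hM : (0 : ℝ) < max ((2 : ℝ) ^ (α - 1)) 1 :=
    lt_of_lt_of_le one_pos (le_max_right _ _)
  rw [div_mul_eq_mul_div, one_mul, div_le_iff₀ hM]
  have h1 : c ^ α ≤ (a + b) ^ α := Real.rpow_le_rpow hc h hα.le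
  refine h1.trans ?_
  have hab : (0:ℝ) ≤ a ^ α + b ^ α :=
    add_nonneg (Real.rpow_nonneg ha α) (Real.rpow_nonneg hb α)
  rcases le_total α 1 with h1' | h1'
  · have key : (a + b) ^ α ≤ a ^ α + b ^ α := by
      lift a to NNReal using ha
      lift b to NNReal using hb
      have := NNReal.rpow_add_le_add_rpow a b hα.le h1'
      exact_mod_cast this
    calc (a + b) ^ α ≤ a ^ α + b ^ α := key
      _ = (a ^ α + b ^ α) * 1 := (mul_one _).symm
      _ ≤ (a ^ α + b ^ α) * max ((2 : ℝ) ^ (α - 1)) 1 :=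
        mul_le_mul_of_nonneg_left (le_max_right _ _) hab
  · have key : (a + b) ^ α ≤ (2 : ℝ) ^ (α - 1) * (a ^ α + b ^ α) := by
      lift a to NNReal using ha
      lift b to NNReal using hb
      have := NNReal.rpow_add_le_mul_rpow_add_rpow a b h1'
      exact_mod_cast this
    calc (a + b) ^ α ≤ (2 : ℝ) ^ (α - 1) * (a ^ α + b ^ α) := key
      _ ≤ max ((2 : ℝ) ^ (α - 1)) 1 * (a ^ α + b ^ α) :=
        mul_le_mul_of_nonneg_right (le_max_left _ _) hab
      _ = (a ^ α + b ^ α) * max ((2 : ℝ) ^ (α - 1)) 1 := mul_comm _ _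

theorem tensor_convolution_caloric_bound (d p q r : ℕ) (hd : 1 ≤ d)
    (α lam : ℝ) (hα : 0 < α) (hlam : 0 < lam) (n₁ n₂ : ℕ)
    (f : EuclideanSpace ℝ (Fin d) → ℝ →
      (EuclideanSpace ℂ (Fin q) →L[ℂ] EuclideanSpace ℂ (Fin p)))
    (g : EuclideanSpace ℝ (Fin d) → ℝ →
      (EuclideanSpace ℂ (Fin q) →L[ℂ] EuclideanSpace ℂ (Fin r)))
    (f0 g0 : EuclideanSpace ℝ (Fin d) → ℝ)
    (hf0meas : Measurable f0) (hg0meas : Measurable g0)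
    (hf0nonneg : ∀ ξ, 0 ≤ f0 ξ) (hg0nonneg : ∀ ξ, 0 ≤ g0 ξ)
    (hf0L1 : MemLp f0 1 volume) (hf0Linf : MemLp f0 ⊤ volume)
    (hg0L1 : MemLp g0 1 volume) (hg0Linf : MemLp g0 ⊤ volume)
    (hfmeas : ∀ t : ℝ, 0 ≤ t → StronglyMeasurable fun ξ => f ξ t)
    (hgmeas : ∀ t : ℝ, 0 ≤ t → StronglyMeasurable fun ξ => g ξ t)
    (hfbound : ∀ ξ, ∀ t : ℝ, 0 ≤ t →
      ‖f ξ t‖ ≤ t ^ n₁ * Real.exp (-(lam * t * ‖ξ‖ ^ α)) * f0 ξ)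
    (hgbound : ∀ ξ, ∀ t : ℝ, 0 ≤ t →
      ‖g ξ t‖ ≤ t ^ n₂ * Real.exp (-(lam * t * ‖ξ‖ ^ α)) * g0 ξ) :
    ∀ ξ, ∀ t : ℝ, 0 ≤ t →
      ‖∫ η, (f (ξ - η) t).comp (ContinuousLinearMap.adjoint (g η t))‖ ≤
        t ^ (n₁ + n₂) *
          Real.exp (-((1 / max ((2 : ℝ) ^ (α - 1)) 1) * lam * t * ‖ξ‖ ^ α)) *
          ∫ η, f0 (ξ - η) * g0 η := by
  intro ξ t ht
  set C : ℝ := t ^ (n₁ + n₂) *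
      Real.exp (-((1 / max ((2 : ℝ) ^ (α - 1)) 1) * lam * t * ‖ξ‖ ^ α)) with hC
  have hCnn : 0 ≤ C := mul_nonneg (pow_nonneg ht _) (Real.exp_pos _).le
  -- integrability of the convolution kernel bound
  have hf0int : Integrable f0 volume := memLp_one_iff_integrable.mp hf0L1
  have h1 : Integrable (fun η => f0 (ξ - η)) volume := hf0int.comp_sub_left ξ
  have hg0fin : eLpNormEssSup g0 volume < ⊤ := by
    have := hg0Linf.2
    rwa [eLpNorm_exponent_top] at this
  have hg0ae : ∀ᵐ η ∂(volume : Measure (EuclideanSpace ℝ (Fin d))),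
      ‖g0 η‖ ≤ (eLpNormEssSup g0 volume).toReal := by
    filter_upwards [ae_le_eLpNormEssSup (f := g0) (μ := volume)] with x hx
    have h2 : ((‖g0 x‖₊ : ℝ≥0∞)).toReal ≤ (eLpNormEssSup g0 volume).toReal :=
      ENNReal.toReal_mono hg0fin.ne hx
    simpa using h2
  have hint0 : Integrable (fun η => g0 η * f0 (ξ - η)) volume :=
    h1.bdd_mul hg0meas.aestronglyMeasurable hg0ae
  have hint : Integrable (fun η => f0 (ξ - η) * g0 η) volume := by
    simpa [mul_comm] using hint0
  -- pointwise bound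
  have hpt : ∀ η, ‖(f (ξ - η) t).comp (ContinuousLinearMap.adjoint (g η t))‖ ≤
      C * (f0 (ξ - η) * g0 η) := by
    intro η
    have hcomp : ‖(f (ξ - η) t).comp (ContinuousLinearMap.adjoint (g η t))‖ ≤
        ‖f (ξ - η) t‖ * ‖g η t‖ := by
      refine (ContinuousLinearMap.opNorm_comp_le _ _).trans_eq ?_
      rw [ContinuousLinearMap.adjoint.norm_map]
    have hmul : ‖f (ξ - η) t‖ * ‖g η t‖ ≤
        (t ^ n₁ * Real.exp (-(lam * t * ‖ξ - η‖ ^ α)) * f0 (ξ - η)) *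
        (t ^ n₂ * Real.exp (-(lam * t * ‖η‖ ^ α)) * g0 η) :=
      mul_le_mul (hfbound _ t ht) (hgbound _ t ht) (norm_nonneg _)
        (mul_nonneg (mul_nonneg (pow_nonneg ht _) (Real.exp_pos _).le) (hf0nonneg _))
    refine hcomp.trans (hmul.trans ?_)
    have hexp : Real.exp (-(lam * t * ‖ξ - η‖ ^ α)) * Real.exp (-(lam * t * ‖η‖ ^ α)) ≤
        Real.exp (-((1 / max ((2 : ℝ) ^ (α - 1)) 1) * lam * t * ‖ξ‖ ^ α)) := by
      rw [← Real.exp_add]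
      apply Real.exp_le_exp.mpr
      have hkey : (1 / max ((2 : ℝ) ^ (α - 1)) 1) * ‖ξ‖ ^ α ≤ ‖ξ - η‖ ^ α + ‖η‖ ^ α := by
        refine aux_rpow_triangle α hα (norm_nonneg _) (norm_nonneg _) (norm_nonneg _) ?_
        calc ‖ξ‖ = ‖(ξ - η) + η‖ := by rw [sub_add_cancel]
          _ ≤ ‖ξ - η‖ + ‖η‖ := norm_add_le _ _
      have hlt : 0 ≤ lam * t := mul_nonneg hlam.le ht
      nlinarith [mul_le_mul_of_nonneg_left hkey hlt]
    calc (t ^ n₁ * Real.exp (-(lam * t * ‖ξ - η‖ ^ α)) * f0 (ξ - η)) *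
        (t ^ n₂ * Real.exp (-(lam * t * ‖η‖ ^ α)) * g0 η)
        = t ^ (n₁ + n₂) *
          (Real.exp (-(lam * t * ‖ξ - η‖ ^ α)) * Real.exp (-(lam * t * ‖η‖ ^ α))) *
          (f0 (ξ - η) * g0 η) := by rw [pow_add]; ring
      _ ≤ C * (f0 (ξ - η) * g0 η) := by
          refine mul_le_mul_of_nonneg_right ?_
            (mul_nonneg (hf0nonneg _) (hg0nonneg _))
          exact mul_le_mul_of_nonneg_left hexp (pow_nonneg ht _)
  calc ‖∫ η, (f (ξ - η) t).comp (ContinuousLinearMap.adjoint (g η t))‖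
      ≤ ∫ η, ‖(f (ξ - η) t).comp (ContinuousLinearMap.adjoint (g η t))‖ :=
        norm_integral_le_integral_norm _
    _ ≤ ∫ η, C * (f0 (ξ - η) * g0 η) :=
        integral_mono_of_nonneg (Filter.Eventually.of_forall fun η => norm_nonneg _)
          (hint.const_mul C) (Filter.Eventually.of_forall hpt)
    _ = C * ∫ η, f0 (ξ - η) * g0 η := integral_const_mul C _
end

section
/- Let d ≥ 1, ν > 0, n₁, n₂ ∈ ℕ, and 0 < β ≤ 4π²ν. Let K : ℝ^d → ℂ^{d×d} be measurable with operator norm ‖K(ξ)‖ ≤ 1 for all ξ. Let f, g : ℝ^d × [0,∞) → ℂ^d be measurable in ξ for each t, and let f⁰, g⁰ : ℝ^d → [0,∞) be measurable functions in L¹(ℝ^d) ∩ L^∞(ℝ^d) such that |f(ξ,t)| ≤ t^{n₁} e^{−βt|ξ|²} f⁰(ξ) and |g(ξ,t)| ≤ t^{n₂} e^{−βt|ξ|²} g⁰(ξ) for all (ξ,t). Define (f ⊙ g)(ξ,t) := 2πi K(ξ) [ ∫₀ᵗ e^{−4π²ν(t−s)|ξ|²} (f ∗ g)(ξ,s) ds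 ] ξ, where (f ∗ g)(ξ,s) := ∫_{ℝ^d} f(ξ−η,s) g(η,s)^* dη. Then for every t ≥ 0 and every ξ ∈ ℝ^d with ξ ≠ 0, |(f ⊙ g)(ξ,t)| ≤ (t^{n₁+n₂}/(πν)) · e^{−(β/2) t |ξ|²} · (f⁰ ∗ g⁰)(ξ)/|ξ|. -/
open MeasureTheory

set_option maxHeartbeats 1000000 in
set_option synthInstance.maxHeartbeats 200000 in

theorem odot_product_caloric_bound (d : ℕ) (hd : 1 ≤ d) (ν : ℝ) (hν : 0 < ν)
    (n₁ n₂ : ℕ) (β : ℝ) (hβ0 : 0 < β) (hβ : β ≤ 4 * Real.pi ^ 2 * ν)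
    (K : EuclideanSpace ℝ (Fin d) →
      (EuclideanSpace ℂ (Fin d) →L[ℂ] EuclideanSpace ℂ (Fin d)))
    (hK : ∀ ξ, ‖K ξ‖ ≤ 1)
    (f g : EuclideanSpace ℝ (Fin d) → ℝ → EuclideanSpace ℂ (Fin d))
    (f0 g0 : EuclideanSpace ℝ (Fin d) → ℝ)
    (hf0meas : Measurable f0) (hg0meas : Measurable g0)
    (hf0nonneg : ∀ ξ, 0 ≤ f0 ξ) (hg0nonneg : ∀ ξ, 0 ≤ g0 ξ)
    (hf0L1 : MemLp f0 1 volume) (hf0Linf : MemLp f0 ⊤ volume)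
    (hg0L1 : MemLp g0 1 volume) (hg0Linf : MemLp g0 ⊤ volume)
    (hfmeas : ∀ t : ℝ, 0 ≤ t → StronglyMeasurable fun ξ => f ξ t)
    (hgmeas : ∀ t : ℝ, 0 ≤ t → StronglyMeasurable fun ξ => g ξ t)
    (hfbound : ∀ ξ, ∀ t : ℝ, 0 ≤ t →
      ‖f ξ t‖ ≤ t ^ n₁ * Real.exp (-(β * t * ‖ξ‖ ^ 2)) * f0 ξ)
    (hgbound : ∀ ξ, ∀ t : ℝ, 0 ≤ t →
      ‖g ξ t‖ ≤ t ^ n₂ * Real.exp (-(β * t * ‖ξ‖ ^ 2)) * g0 ξ) :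
    ∀ t : ℝ, 0 ≤ t → ∀ ξ : EuclideanSpace ℝ (Fin d), ξ ≠ 0 →
      ‖((2 * Real.pi : ℂ) * Complex.I) •
          (K ξ) ((∫ s in (0 : ℝ)..t,
              Real.exp (-(4 * Real.pi ^ 2 * ν * (t - s) * ‖ξ‖ ^ 2)) •
                ∫ η, (innerSL ℂ (g η s)).smulRight (f (ξ - η) s))
            ((WithLp.equiv 2 (Fin d → ℂ)).symm fun j => ((ξ j : ℝ) : ℂ)))‖ ≤
        t ^ (n₁ + n₂) / (Real.pi * ν) * Real.exp (-(β / 2 * t * ‖ξ‖ ^ 2)) *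
          ((∫ η, f0 (ξ - η) * g0 η) / ‖ξ‖) := by
  intro t ht ξ hξ
  have hπ : (0 : ℝ) < Real.pi := Real.pi_pos
  have hξpos : (0 : ℝ) < ‖ξ‖ := norm_pos_iff.mpr hξ
  set C : ℝ := ∫ η, f0 (ξ - η) * g0 η with hCdef
  have hC0 : 0 ≤ C :=
    integral_nonneg fun η => mul_nonneg (hf0nonneg _) (hg0nonneg _)
  -- integrability of the convolution integrand
  have hf0int : Integrable f0 volume := memLp_one_iff_integrable.mp hf0L1
  have hf0shift : Integrable (fun η => f0 (ξ - η)) volume :=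
    (MeasureTheory.integrable_comp_sub_left f0 ξ).mpr hf0int
  have hg0bdd : ∀ᵐ x, ‖g0 x‖ ≤ (eLpNorm g0 ⊤ volume).toReal := by
    filter_upwards [ae_le_eLpNormEssSup (f := g0) (μ := volume)] with x hx
    rw [eLpNorm_exponent_top]
    have h2 : eLpNormEssSup g0 volume ≠ ⊤ := by
      simpa [eLpNorm_exponent_top] using hg0Linf.2.ne
    calc ‖g0 x‖ = ((‖g0 x‖₊ : ENNReal)).toReal := by simp
      _ ≤ _ := ENNReal.toReal_mono h2 hx
  have hCint : Integrable (fun η => f0 (ξ - η) * g0 η) volume := by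
    have := hf0shift.bdd_mul (c := (eLpNorm g0 ⊤ volume).toReal)
      hg0meas.aestronglyMeasurable hg0bdd
    simpa [mul_comm] using this
  set E : ℝ := Real.exp (-(β / 2 * t * ‖ξ‖ ^ 2)) with hEdef
  have hE0 : 0 < E := Real.exp_pos _
  set c2 : ℝ := 2 * Real.pi ^ 2 * ν * ‖ξ‖ ^ 2 with hc2def
  have hc2pos : 0 < c2 := by positivity
  -- inner bound for the convolution matrix
  have hMs : ∀ s ∈ Set.Ioc (0 : ℝ) t,
      ‖∫ η, (innerSL ℂ (g η s)).smulRight (f (ξ - η) s)‖ ≤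
        t ^ (n₁ + n₂) * Real.exp (-(β / 2 * s * ‖ξ‖ ^ 2)) * C := by
    intro s hs
    have hs0 : (0 : ℝ) ≤ s := hs.1.le
    have key : ∀ η, ‖(innerSL ℂ (g η s)).smulRight (f (ξ - η) s)‖ ≤
        (t ^ (n₁ + n₂) * Real.exp (-(β / 2 * s * ‖ξ‖ ^ 2))) * (f0 (ξ - η) * g0 η) := by
      intro η
      rw [ContinuousLinearMap.norm_smulRight_apply, innerSL_apply_norm]
      have h1 := hfbound (ξ - η) s hs0
      have h2 := hgbound η s hs0
      have e1 : s ^ (n₁ + n₂) ≤ t ^ (n₁ + n₂) := pow_le_pow_left₀ hs0 hs.2 _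
      have e2 : Real.exp (-(β * s * ‖η‖ ^ 2)) * Real.exp (-(β * s * ‖ξ - η‖ ^ 2)) ≤
          Real.exp (-(β / 2 * s * ‖ξ‖ ^ 2)) := by
        rw [← Real.exp_add]
        apply Real.exp_le_exp.mpr
        have htri : ‖ξ‖ ≤ ‖ξ - η‖ + ‖η‖ := by
          simpa using norm_add_le (ξ - η) η
        have hsq : ‖ξ‖ ^ 2 ≤ (‖ξ - η‖ + ‖η‖) ^ 2 :=
          pow_le_pow_left₀ (norm_nonneg _) htri 2
        nlinarith [sq_nonneg (‖ξ - η‖ - ‖η‖), mul_nonneg hβ0.le hs0,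
          mul_nonneg (mul_nonneg hβ0.le hs0) (sq_nonneg (‖ξ - η‖ - ‖η‖))]
      calc ‖g η s‖ * ‖f (ξ - η) s‖
          ≤ (s ^ n₂ * Real.exp (-(β * s * ‖η‖ ^ 2)) * g0 η) *
            (s ^ n₁ * Real.exp (-(β * s * ‖ξ - η‖ ^ 2)) * f0 (ξ - η)) :=
            mul_le_mul h2 h1 (norm_nonneg _)
              (mul_nonneg (mul_nonneg (pow_nonneg hs0 _) (Real.exp_pos _).le)
                (hg0nonneg _))
        _ = (s ^ (n₁ + n₂) *
              (Real.exp (-(β * s * ‖η‖ ^ 2)) * Real.exp (-(β * s * ‖ξ - η‖ ^ 2)))) *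
              (f0 (ξ - η) * g0 η) := by
            rw [pow_add]; ring
        _ ≤ (t ^ (n₁ + n₂) * Real.exp (-(β / 2 * s * ‖ξ‖ ^ 2))) * (f0 (ξ - η) * g0 η) := by
            apply mul_le_mul_of_nonneg_right _
              (mul_nonneg (hf0nonneg _) (hg0nonneg _))
            exact mul_le_mul e1 e2 (by positivity) (pow_nonneg ht _)
    calc ‖∫ η, (innerSL ℂ (g η s)).smulRight (f (ξ - η) s)‖
        ≤ ∫ η, (t ^ (n₁ + n₂) * Real.exp (-(β / 2 * s * ‖ξ‖ ^ 2))) *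
            (f0 (ξ - η) * g0 η) :=
          norm_integral_le_of_norm_le (hCint.const_mul _) (ae_of_all _ key)
      _ = t ^ (n₁ + n₂) * Real.exp (-(β / 2 * s * ‖ξ‖ ^ 2)) * C := by
          rw [integral_const_mul]
  -- bound function for the interval integral
  set G : ℝ → ℝ := fun s => t ^ (n₁ + n₂) * E * C * Real.exp (-(c2 * (t - s))) with hGdef
  have hexpcont : Continuous fun s : ℝ => Real.exp (-(c2 * (t - s))) :=
    Real.continuous_exp.comp ((continuous_const.mul (continuous_const.sub continuous_id)).neg)
  have hGcont : Continuous G := continuous_const.mul hexpcont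
  have hGint : IntervalIntegrable G volume 0 t := hGcont.intervalIntegrable 0 t
  -- the operator A
  set A := ∫ s in (0 : ℝ)..t,
      Real.exp (-(4 * Real.pi ^ 2 * ν * (t - s) * ‖ξ‖ ^ 2)) •
        ∫ η, (innerSL ℂ (g η s)).smulRight (f (ξ - η) s) with hAdef
  have hGval : ∫ s in (0 : ℝ)..t, G s =
      t ^ (n₁ + n₂) * E * C * ((1 - Real.exp (-(c2 * t))) / c2) := by
    rw [hGdef]
    rw [intervalIntegral.integral_const_mul]
    congr 1
    have hderiv : ∀ s : ℝ, HasDerivAt (fun u : ℝ => Real.exp (-(c2 * (t - u))) / c2)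
        (Real.exp (-(c2 * (t - s)))) s := by
      intro s
      have h1 : HasDerivAt (fun u : ℝ => -(c2 * (t - u))) c2 s := by
        have h0 : HasDerivAt (fun u : ℝ => -(c2 * (t - u))) (-(c2 * (-1 : ℝ))) s :=
          (((hasDerivAt_id s).const_sub t).const_mul c2).neg
        convert h0 using 1
        ring
      have h2 := (h1.exp).div_const c2
      have h3 : Real.exp (-(c2 * (t - s))) * c2 / c2 = Real.exp (-(c2 * (t - s))) :=
        mul_div_cancel_right₀ _ hc2pos.ne'
      rw [h3] at h2
      exact h2
    rw [intervalIntegral.integral_eq_sub_of_hasDerivAt (fun s _ => hderiv s)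
      (hexpcont.intervalIntegrable 0 t)]
    rw [sub_self, mul_zero, neg_zero, Real.exp_zero, sub_zero]
    ring
  have hA : ‖A‖ ≤ t ^ (n₁ + n₂) * E * C / c2 := by
    have step1 : ‖A‖ ≤ |∫ s in (0 : ℝ)..t, G s| := by
      apply intervalIntegral.norm_integral_le_abs_of_norm_le _ hGint
      filter_upwards [ae_restrict_mem measurableSet_uIoc] with s hsmem
      rw [Set.uIoc_of_le ht] at hsmem
      have hs0 : (0 : ℝ) ≤ s := hsmem.1.le
      have hts : s ≤ t := hsmem.2
      have hM := hMs s hsmem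
      calc ‖Real.exp (-(4 * Real.pi ^ 2 * ν * (t - s) * ‖ξ‖ ^ 2)) •
            ∫ η, (innerSL ℂ (g η s)).smulRight (f (ξ - η) s)‖
          ≤ Real.exp (-(4 * Real.pi ^ 2 * ν * (t - s) * ‖ξ‖ ^ 2)) *
            ‖∫ η, (innerSL ℂ (g η s)).smulRight (f (ξ - η) s)‖ := by
            refine (norm_smul_le (Real.exp (-(4 * Real.pi ^ 2 * ν * (t - s) * ‖ξ‖ ^ 2)))
              (∫ η, (innerSL ℂ (g η s)).smulRight (f (ξ - η) s))).trans_eq ?_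
            rw [Real.norm_eq_abs, abs_of_pos (Real.exp_pos _)]
        _ ≤ Real.exp (-(4 * Real.pi ^ 2 * ν * (t - s) * ‖ξ‖ ^ 2)) *
            (t ^ (n₁ + n₂) * Real.exp (-(β / 2 * s * ‖ξ‖ ^ 2)) * C) :=
            mul_le_mul_of_nonneg_left hM (Real.exp_pos _).le
        _ = t ^ (n₁ + n₂) * C *
            (Real.exp (-(4 * Real.pi ^ 2 * ν * (t - s) * ‖ξ‖ ^ 2)) *
              Real.exp (-(β / 2 * s * ‖ξ‖ ^ 2))) := by ring
        _ ≤ t ^ (n₁ + n₂) * C * (E * Real.exp (-(c2 * (t - s)))) := by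
            apply mul_le_mul_of_nonneg_left _ (mul_nonneg (pow_nonneg ht _) hC0)
            rw [← Real.exp_add, hEdef, ← Real.exp_add]
            apply Real.exp_le_exp.mpr
            rw [hc2def]
            have h2a : (0 : ℝ) ≤ 2 * Real.pi ^ 2 * ν - β / 2 := by nlinarith
            nlinarith [mul_nonneg (mul_nonneg h2a (sub_nonneg.mpr hts)) (sq_nonneg ‖ξ‖)]
        _ = G s := by rw [hGdef]; ring
    refine step1.trans ?_
    have hexple : Real.exp (-(c2 * t)) ≤ 1 :=
      Real.exp_le_one_iff.mpr (by nlinarith [mul_nonneg hc2pos.le ht])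
    have hnn : (0 : ℝ) ≤ 1 - Real.exp (-(c2 * t)) := by linarith
    rw [hGval, abs_of_nonneg (mul_nonneg (mul_nonneg (mul_nonneg (pow_nonneg ht _) hE0.le) hC0)
      (div_nonneg hnn hc2pos.le))]
    calc t ^ (n₁ + n₂) * E * C * ((1 - Real.exp (-(c2 * t))) / c2)
        ≤ t ^ (n₁ + n₂) * E * C * (1 / c2) := by
          have hnum : (1 - Real.exp (-(c2 * t))) / c2 ≤ 1 / c2 := by
            gcongr
            linarith [Real.exp_pos (-(c2 * t))]
          exact mul_le_mul_of_nonneg_left hnum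
            (mul_nonneg (mul_nonneg (pow_nonneg ht _) hE0.le) hC0)
      _ = t ^ (n₁ + n₂) * E * C / c2 := by ring
  -- norms of the scalar and of the vector
  have hscal : ‖((2 * Real.pi : ℂ) * Complex.I)‖ = 2 * Real.pi := by
    simp [Complex.norm_real, abs_of_nonneg Real.pi_nonneg]
  have hv : ‖(WithLp.equiv 2 (Fin d → ℂ)).symm (fun j => ((ξ j : ℝ) : ℂ))‖ = ‖ξ‖ := by
    rw [EuclideanSpace.norm_eq, EuclideanSpace.norm_eq]
    simp
  -- assemble
  rw [norm_smul, hscal]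
  calc 2 * Real.pi * ‖(K ξ) (A ((WithLp.equiv 2 (Fin d → ℂ)).symm fun j => ((ξ j : ℝ) : ℂ)))‖
      ≤ 2 * Real.pi * (‖A‖ * ‖ξ‖) := by
        apply mul_le_mul_of_nonneg_left _ (by positivity)
        calc ‖(K ξ) (A ((WithLp.equiv 2 (Fin d → ℂ)).symm fun j => ((ξ j : ℝ) : ℂ)))‖
            ≤ ‖K ξ‖ * ‖A ((WithLp.equiv 2 (Fin d → ℂ)).symm fun j => ((ξ j : ℝ) : ℂ))‖ :=
              (K ξ).le_opNorm _
          _ ≤ 1 * (‖A‖ * ‖(WithLp.equiv 2 (Fin d → ℂ)).symm fun j => ((ξ j : ℝ) : ℂ)‖) :=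
              mul_le_mul (hK ξ) (A.le_opNorm _) (norm_nonneg _) zero_le_one
          _ = ‖A‖ * ‖ξ‖ := by rw [one_mul, hv]
    _ ≤ 2 * Real.pi * ((t ^ (n₁ + n₂) * E * C / c2) * ‖ξ‖) := by
        apply mul_le_mul_of_nonneg_left _ (by positivity)
        exact mul_le_mul_of_nonneg_right hA hξpos.le
    _ = t ^ (n₁ + n₂) / (Real.pi * ν) * E * (C / ‖ξ‖) := by
        rw [hc2def]
        field_simp
end
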